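/- arXiv:0805.2917 — 5 statements merged into one kernel-verified Lean document; each statement's English description precedes it below -/
import Mathlib

section
/- Let ‖·‖ be a compatible unitarily invariant norm with associated symmetric gauge function ψ. If {V_i}_{i=1}^m is a uniformly weighted projective rank-l (m,l,d)-protocol with max_{i≠j} tr(|V_i V_j*|) ≥ l·c_{m,l,d} (i.e. {V_i} ∈ C(m,l,d)), then the worst-case reconstruction error for two lost packets satisfies e_2^ψ(V) ≥ ψ( ((d/(ml)) + c_{m,l,d})·e_l , ((d/(ml)) − c_{m,l,d})·e_l ), the gauge function being evaluated at the vector in ℝ^{2l} whose first l entries equal d/(ml) + c_{m,l,d} and last l entries equal d/(ml) − c_{m,l,d}. -/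
open Matrix BigOperators
open scoped ComplexOrder

noncomputable section

variable {𝕜 : Type*} [RCLike 𝕜]

/-- Sum of the `k` largest entries of a vector `x : Fin n → ℝ`,
as the supremum of the sums over subsets of cardinality `k`. -/
noncomputable def kMaxSum {n : ℕ} (x : Fin n → ℝ) (k : ℕ) : ℝ :=
  sSup ((fun t : Finset (Fin n) => ∑ i ∈ t, x i) '' {t : Finset (Fin n) | t.card = k})

/-- `x ≺_w y` : submajorization of real vectors. -/
def SubMajVec {n : ℕ} (x y : Fin n → ℝ) : Prop :=
  ∀ k : ℕ, k ≤ n → kMaxSum x k ≤ kMaxSum y k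

/-- `A ≺_w B` : submajorization of self-adjoint matrices (via eigenvalues). -/
def SubMajMat {n : ℕ} (A B : Matrix (Fin n) (Fin n) 𝕜) : Prop :=
  ∃ (hA : A.IsHermitian) (hB : B.IsHermitian), SubMajVec hA.eigenvalues hB.eigenvalues

/-- `A ≺ B` : majorization of self-adjoint matrices. -/
def MajMat {n : ℕ} (A B : Matrix (Fin n) (Fin n) 𝕜) : Prop :=
  SubMajMat A B ∧ A.trace = B.trace

/-- The q-potential `P_q(V) = Σ_{i,j} |V_i V_j*|²` of a reconstruction system. -/
noncomputable def qPotential {m l d : ℕ} (V : Fin m → Matrix (Fin l) (Fin d) 𝕜) :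
    Matrix (Fin l) (Fin l) 𝕜 :=
  ∑ i, ∑ j, (V i * (V j)ᴴ)ᴴ * (V i * (V j)ᴴ)

/-- `tr |A|² = tr(AᴴA)`, as a real number. -/
noncomputable def traceAbsSq {a b : ℕ} (A : Matrix (Fin a) (Fin b) 𝕜) : ℝ :=
  RCLike.re (Aᴴ * A).trace

/-- `tr |A| = tr((AᴴA)^{1/2})`, the sum of the singular values of `A`. -/
noncomputable def traceAbs {a b : ℕ} (A : Matrix (Fin a) (Fin b) 𝕜) : ℝ :=
  ∑ j, Real.sqrt ((Matrix.posSemidef_conjTranspose_mul_self A).1.eigenvalues j)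

/-- A unitarily invariant norm on `M_n(𝕜)`. -/
structure UINorm (n : ℕ) (𝕜 : Type*) [RCLike 𝕜] where
  N : Matrix (Fin n) (Fin n) 𝕜 → ℝ
  nonneg : ∀ A, 0 ≤ N A
  eq_zero : ∀ A, N A = 0 → A = 0
  triangle : ∀ A B, N (A + B) ≤ N A + N B
  smul_eq : ∀ (c : 𝕜) (A), N (c • A) = ‖c‖ * N A
  invariant : ∀ (A : Matrix (Fin n) (Fin n) 𝕜) (U W : Matrix.unitaryGroup (Fin n) 𝕜),
    N ((U : Matrix (Fin n) (Fin n) 𝕜) * A * (W : Matrix (Fin n) (Fin n) 𝕜)) = N A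

/-- `X ⊕ 0_t` : padding a square matrix with `t` zero rows and columns. -/
noncomputable def padMat {r : ℕ} (t : ℕ) (X : Matrix (Fin r) (Fin r) 𝕜) :
    Matrix (Fin (r + t)) (Fin (r + t)) 𝕜 :=
  Matrix.reindex finSumFinEquiv finSumFinEquiv (Matrix.fromBlocks X 0 0 0)

/-- A compatible unitarily invariant norm: a family of unitarily invariant norms,
one in each dimension, unchanged by adjoining zero rows and columns. -/
structure CUIN (𝕜 : Type*) [RCLike 𝕜] where
  N : ∀ n : ℕ, Matrix (Fin n) (Fin n) 𝕜 → ℝ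
  nonneg : ∀ n A, 0 ≤ N n A
  eq_zero : ∀ n A, N n A = 0 → A = 0
  triangle : ∀ n A B, N n (A + B) ≤ N n A + N n B
  smul_eq : ∀ n (c : 𝕜) (A), N n (c • A) = ‖c‖ * N n A
  invariant : ∀ n (A : Matrix (Fin n) (Fin n) 𝕜) (U W : Matrix.unitaryGroup (Fin n) 𝕜),
    N n ((U : Matrix (Fin n) (Fin n) 𝕜) * A * (W : Matrix (Fin n) (Fin n) 𝕜)) = N n A
  compatible : ∀ (r t : ℕ) (X : Matrix (Fin r) (Fin r) 𝕜), N (r + t) (padMat t X) = N r X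

namespace CUIN

/-- The associated symmetric gauge function, evaluated on a real vector:
`ψ(x) = ‖diag(x)‖`. -/
noncomputable def psi (Φ : CUIN 𝕜) {n : ℕ} (x : Fin n → ℝ) : ℝ :=
  Φ.N n (Matrix.diagonal fun i => (x i : 𝕜))

/-- `η_ψ(l) = ψ(e_l)/l = ‖I_l‖/l`. -/
noncomputable def eta (Φ : CUIN 𝕜) (l : ℕ) : ℝ := Φ.N l 1 / l

/-- A compatible u.i.n. is strict if `‖A‖ = tr(A)·η_ψ(l)` for positive semidefinite `A`
forces `A = (tr A / l)·I`. -/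
def Strict (Φ : CUIN 𝕜) : Prop :=
  ∀ (l : ℕ) (A : Matrix (Fin l) (Fin l) 𝕜), A.PosSemidef →
    Φ.N l A = RCLike.re A.trace * Φ.eta l → A = (A.trace / (l : 𝕜)) • 1

/-- A 2-strongly strict compatible u.i.n.: strict, and on `M_2` any two self-adjoint
matrices `A ≺ B` with equal norms are unitarily equivalent. -/
def TwoStronglyStrict (Φ : CUIN 𝕜) : Prop :=
  Φ.Strict ∧ ∀ A B : Matrix (Fin 2) (Fin 2) 𝕜, A.IsHermitian → B.IsHermitian →
    MajMat A B → Φ.N 2 A = Φ.N 2 B →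
    ∃ U ∈ Matrix.unitaryGroup (Fin 2) 𝕜, A = star U * B * U

end CUIN

/-- Worst-case reconstruction error for `p` lost packets:
`e_p^ψ(V) = max_{|K| = p} ‖V*V − V*E_K V‖ = max_{|K| = p} ‖Σ_{i ∈ K} Vᵢ*Vᵢ‖`. -/
noncomputable def errP {m l d : ℕ} (Φ : CUIN 𝕜) (p : ℕ)
    (V : Fin m → Matrix (Fin l) (Fin d) 𝕜) : ℝ :=
  sSup {r : ℝ | ∃ K : Finset (Fin m), K.card = p ∧ r = Φ.N d (∑ i ∈ K, (V i)ᴴ * V i)}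

/-- The constant `c_{m,l,d} = √( (d/((m−1)·m·l))·(1 − d/(ml)) )`. -/
noncomputable def cmld (m l d : ℕ) : ℝ :=
  Real.sqrt ((d : ℝ) / (((m : ℝ) - 1) * m * l) * (1 - (d : ℝ) / ((m : ℝ) * l)))

/-- A uniformly weighted projective rank-`l` `(m,l,d)`-protocol:
`Σᵢ Vᵢ*Vᵢ = I_d` and `VᵢVᵢ* = (d/(ml))·I_l` for every `i`. -/
def IsUWP {m l d : ℕ} (V : Fin m → Matrix (Fin l) (Fin d) 𝕜) : Prop :=
  (∑ i, (V i)ᴴ * V i = 1) ∧ ∀ i, V i * (V i)ᴴ = ((d : 𝕜) / ((m : 𝕜) * (l : 𝕜))) • 1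

/-- A uniformly weighted projective rank-`l` `(m,l,d)`-protocol, stated via projections:
`Σᵢ Vᵢ*Vᵢ = I_d` and `Vᵢ*Vᵢ = (d/(ml))·Pᵢ` with `Pᵢ` rank-`l` orthogonal projections. -/
def IsUWPProj {m l d : ℕ} (V : Fin m → Matrix (Fin l) (Fin d) 𝕜) : Prop :=
  (∑ i, (V i)ᴴ * V i = 1) ∧ ∀ i, ∃ P : Matrix (Fin d) (Fin d) 𝕜,
    Pᴴ = P ∧ P * P = P ∧ P.rank = l ∧ (V i)ᴴ * V i = ((d : 𝕜) / ((m : 𝕜) * (l : 𝕜))) • P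

/-- Padding a vector with zeros to length `d`. -/
def padVec {l : ℕ} (d : ℕ) (x : Fin l → ℝ) : Fin d → ℝ :=
  fun j => if h : (j : ℕ) < l then x ⟨j, h⟩ else 0

end



open Matrix BigOperators Polynomial
open scoped ComplexOrder

noncomputable section AuxSG

variable {𝕜 : Type*} [RCLike 𝕜]

/-- product of (X - C r) over a real multiset, as a polynomial over 𝕜 -/
noncomputable def cpRR (𝕜 : Type*) [RCLike 𝕜] (s : Multiset ℝ) : Polynomial 𝕜 :=
  ((s.map (fun r : ℝ => (r : 𝕜))).map (fun z => X - C z)).prod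

lemma cpRR_inj {s t : Multiset ℝ} (h : cpRR 𝕜 s = cpRR 𝕜 t) : s = t := by
  have hs := congrArg Polynomial.roots h
  rw [cpRR, cpRR, Polynomial.roots_multiset_prod_X_sub_C,
    Polynomial.roots_multiset_prod_X_sub_C] at hs
  exact Multiset.map_injective (fun a b hab => RCLike.ofReal_inj.mp hab) hs

lemma cpRR_add (s t : Multiset ℝ) : cpRR 𝕜 (s + t) = cpRR 𝕜 s * cpRR 𝕜 t := by
  simp [cpRR, Multiset.map_add]

lemma cpRR_eq_prod {n : ℕ} (v : Fin n → ℝ) :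
    cpRR 𝕜 (Finset.univ.val.map v) = ∏ i, (X - C ((v i : ℝ) : 𝕜)) := by
  rw [cpRR, Multiset.map_map, Multiset.map_map]
  rfl

lemma ms_comp_map {n : ℕ} (f : ℝ → ℝ) (v : Fin n → ℝ) :
    (Finset.univ.val.map (fun k => f (v k)) : Multiset ℝ) = (Finset.univ.val.map v).map f := by
  rw [Multiset.map_map]; rfl

lemma ms_comp_perm {n : ℕ} (v : Fin n → ℝ) (σ : Equiv.Perm (Fin n)) :
    (Finset.univ.val.map (fun k => v (σ k)) : Multiset ℝ) = Finset.univ.val.map v := by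
  have h1 : (Finset.univ.val.map (⇑σ) : Multiset (Fin n)) = Finset.univ.val := by
    have := congrArg Finset.val (Finset.map_univ_equiv σ)
    simpa [Finset.map_val] using this
  calc (Finset.univ.val.map (fun k => v (σ k)) : Multiset ℝ)
      = (Finset.univ.val.map (⇑σ)).map v := by rw [Multiset.map_map]; rfl
    _ = Finset.univ.val.map v := by rw [h1]

lemma exists_comp_perm_of_ms_eq {n : ℕ} {v w : Fin n → ℝ}
    (h : (Finset.univ.val.map v : Multiset ℝ) = Finset.univ.val.map w) :
    ∃ σ : Equiv.Perm (Fin n), v = w ∘ σ := by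
  have hperm : (List.ofFn v).Perm (List.ofFn w) := by
    rw [← Multiset.coe_eq_coe, ← Fin.univ_val_map, ← Fin.univ_val_map]
    exact h
  have hp2 : (List.ofFn (v ∘ ⇑(Tuple.sort v))).Perm (List.ofFn (w ∘ ⇑(Tuple.sort w))) :=
    ((Tuple.sort v).ofFn_comp_perm v).trans (hperm.trans ((Tuple.sort w).ofFn_comp_perm w).symm)
  have h1 : v ∘ ⇑(Tuple.sort v) = w ∘ ⇑(Tuple.sort w) :=
    List.ofFn_injective (List.Perm.eq_of_sortedLE
      (Tuple.monotone_sort v).sortedLE_ofFn (Tuple.monotone_sort w).sortedLE_ofFn hp2)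
  refine ⟨(Tuple.sort v).symm.trans (Tuple.sort w), funext fun k => ?_⟩
  have := congrFun h1 ((Tuple.sort v).symm k)
  simpa using this

lemma monotone_eq_of_ms_eq {n : ℕ} {v w : Fin n → ℝ} (hv : Monotone v) (hw : Monotone w)
    (h : (Finset.univ.val.map v : Multiset ℝ) = Finset.univ.val.map w) : v = w := by
  have hperm : (List.ofFn v).Perm (List.ofFn w) := by
    rw [← Multiset.coe_eq_coe, ← Fin.univ_val_map, ← Fin.univ_val_map]; exact h
  exact List.ofFn_injective (List.Perm.eq_of_sortedLE hv.sortedLE_ofFn hw.sortedLE_ofFn hperm)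

lemma sum_eq_ms_sum {n : ℕ} (v : Fin n → ℝ) :
    (∑ i, v i) = ((Finset.univ.val.map v : Multiset ℝ)).sum := rfl

/-- evaluation of the characteristic polynomial -/
lemma eval_charpoly' {ι : Type*} [Fintype ι] [DecidableEq ι] (M : Matrix ι ι 𝕜) (r : 𝕜) :
    M.charpoly.eval r = (r • (1 : Matrix ι ι 𝕜) - M).det := by
  rw [Matrix.charpoly]
  have : (Matrix.charmatrix M).det.eval r = ((Polynomial.evalRingHom r) (Matrix.charmatrix M).det) := rfl
  rw [this, RingHom.map_det]
  congr 1
  ext i j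
  by_cases h : i = j
  · subst h
    simp [Matrix.charmatrix_apply_eq, Matrix.one_apply]
  · simp [Matrix.charmatrix_apply_ne _ _ _ h, Matrix.one_apply_ne h, Matrix.smul_apply]

lemma charpoly_mul_comm' {ι : Type*} [Fintype ι] [DecidableEq ι] (S T : Matrix ι ι 𝕜) :
    (S * T).charpoly = (T * S).charpoly := by
  apply Polynomial.funext
  intro r
  rw [eval_charpoly', eval_charpoly']
  rcases eq_or_ne r 0 with rfl | hr
  · simp only [zero_smul, zero_sub, Matrix.det_neg, Matrix.det_mul]
    ring
  · have h1 : r • (1 : Matrix ι ι 𝕜) - S * T = r • ((1 : Matrix ι ι 𝕜) - (r⁻¹ • S) * T) := by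
      rw [smul_sub, Matrix.smul_mul, smul_smul, mul_inv_cancel₀ hr, one_smul]
    have h2 : r • (1 : Matrix ι ι 𝕜) - T * S = r • ((1 : Matrix ι ι 𝕜) - T * (r⁻¹ • S)) := by
      rw [smul_sub, Matrix.mul_smul, smul_smul, mul_inv_cancel₀ hr, one_smul]
    rw [h1, h2, Matrix.det_smul, Matrix.det_smul, Matrix.det_one_sub_mul_comm]

lemma charpoly_diagonal_real {n : ℕ} (v : Fin n → ℝ) :
    (Matrix.diagonal (fun i => ((v i : ℝ) : 𝕜))).charpoly = cpRR 𝕜 (Finset.univ.val.map v) := by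
  rw [cpRR_eq_prod]
  rw [Matrix.charpoly]
  have : Matrix.charmatrix (Matrix.diagonal (fun i => ((v i : ℝ) : 𝕜)))
      = Matrix.diagonal (fun i => (X - C ((v i : ℝ) : 𝕜))) := by
    ext i j
    by_cases h : i = j
    · subst h; simp [Matrix.charmatrix_apply_eq]
    · simp [Matrix.charmatrix_apply_ne _ _ _ h, Matrix.diagonal_apply_ne _ h]
  rw [this, Matrix.det_diagonal]

lemma charpoly_zero_mat {ι : Type*} [Fintype ι] [DecidableEq ι] :
    (0 : Matrix ι ι 𝕜).charpoly = X ^ (Fintype.card ι) := by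
  rw [Matrix.charpoly]
  have : Matrix.charmatrix (0 : Matrix ι ι 𝕜) = Matrix.diagonal (fun _ => (X : 𝕜[X])) := by
    ext i j
    by_cases h : i = j
    · subst h; simp [Matrix.charmatrix_apply_eq]
    · simp [Matrix.charmatrix_apply_ne _ _ _ h, Matrix.diagonal_apply_ne _ h]
  rw [this, Matrix.det_diagonal]
  simp

lemma charpoly_conj_unitary {ι : Type*} [Fintype ι] [DecidableEq ι]
    (U : Matrix ι ι 𝕜) (hU : U ∈ Matrix.unitaryGroup ι 𝕜) (B : Matrix ι ι 𝕜) :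
    (U * B * star U).charpoly = B.charpoly := by
  have h1 : U * B * star U = U * (B * star U) := by rw [Matrix.mul_assoc]
  rw [h1, _root_.charpoly_mul_comm', Matrix.mul_assoc, (Matrix.mem_unitaryGroup_iff'.mp hU), Matrix.mul_one]

lemma charpoly_isHermitian' {ι : Type*} [Fintype ι] [DecidableEq ι] {A : Matrix ι ι 𝕜}
    (hA : A.IsHermitian) :
    A.charpoly = cpRR 𝕜 (Finset.univ.val.map hA.eigenvalues) := by
  have h0 : A.charpoly = (Matrix.diagonal (RCLike.ofReal ∘ hA.eigenvalues) : Matrix ι ι 𝕜).charpoly := by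
    conv_lhs => rw [hA.spectral_theorem]
    exact charpoly_conj_unitary _ (hA.eigenvectorUnitary).2 _
  rw [h0]
  have h1 : (Matrix.diagonal (RCLike.ofReal ∘ hA.eigenvalues) : Matrix ι ι 𝕜)
      = Matrix.diagonal (fun i => ((hA.eigenvalues i : ℝ) : 𝕜)) := rfl
  rw [h1, Matrix.charpoly]
  have h2 : Matrix.charmatrix (Matrix.diagonal (fun i => ((hA.eigenvalues i : ℝ) : 𝕜)))
      = Matrix.diagonal (fun i => (X - C ((hA.eigenvalues i : ℝ) : 𝕜))) := by
    ext i j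
    by_cases h : i = j
    · subst h; simp [Matrix.charmatrix_apply_eq]
    · simp [Matrix.charmatrix_apply_ne _ _ _ h, Matrix.diagonal_apply_ne _ h]
  rw [h2, Matrix.det_diagonal, cpRR, Multiset.map_map, Multiset.map_map]
  rfl

lemma eig_ms_eq_of_charpoly_eq {ι κ : Type*} [Fintype ι] [DecidableEq ι] [Fintype κ] [DecidableEq κ]
    {A : Matrix ι ι 𝕜} {B : Matrix κ κ 𝕜} (hA : A.IsHermitian) (hB : B.IsHermitian)
    (h : A.charpoly = B.charpoly) :
    (Finset.univ.val.map hA.eigenvalues : Multiset ℝ) = Finset.univ.val.map hB.eigenvalues := by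
  apply cpRR_inj (𝕜 := 𝕜)
  rw [← charpoly_isHermitian' hA, ← charpoly_isHermitian' hB, h]

end AuxSG

noncomputable section AuxN

open Matrix BigOperators Polynomial

variable {𝕜 : Type*} [RCLike 𝕜]

lemma perm_toMatrix_mem_unitary {ι : Type*} [Fintype ι] [DecidableEq ι] (σ : Equiv.Perm ι) :
    (σ.toPEquiv.toMatrix : Matrix ι ι 𝕜) ∈ Matrix.unitaryGroup ι 𝕜 := by
  rw [Matrix.mem_unitaryGroup_iff]
  have hstar : star (σ.toPEquiv.toMatrix : Matrix ι ι 𝕜) = (σ.symm.toPEquiv.toMatrix) := by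
    rw [Matrix.star_eq_conjTranspose, Equiv.toPEquiv_symm, PEquiv.toMatrix_symm]
    ext i j
    simp only [Matrix.conjTranspose_apply, Matrix.transpose_apply, PEquiv.toMatrix_apply]
    split <;> simp
  rw [hstar, ← PEquiv.toMatrix_trans, ← Equiv.toPEquiv_trans]
  simp

lemma CUIN.N_conj (Φ : CUIN 𝕜) {n : ℕ} (A : Matrix (Fin n) (Fin n) 𝕜)
    {U W : Matrix (Fin n) (Fin n) 𝕜} (hU : U ∈ Matrix.unitaryGroup (Fin n) 𝕜)
    (hW : W ∈ Matrix.unitaryGroup (Fin n) 𝕜) :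
    Φ.N n (U * A * W) = Φ.N n A :=
  Φ.invariant n A ⟨U, hU⟩ ⟨W, hW⟩

lemma CUIN.N_submatrix (Φ : CUIN 𝕜) {n : ℕ} (A : Matrix (Fin n) (Fin n) 𝕜)
    (σ : Equiv.Perm (Fin n)) : Φ.N n (A.submatrix ⇑σ ⇑σ) = Φ.N n A := by
  have h : A.submatrix ⇑σ ⇑σ
      = σ.toPEquiv.toMatrix * A * (σ.symm.toPEquiv.toMatrix) := by
    rw [PEquiv.toMatrix_toPEquiv_mul, PEquiv.mul_toMatrix_toPEquiv]
    simp [Matrix.submatrix_submatrix]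
  rw [h]
  exact Φ.N_conj A (perm_toMatrix_mem_unitary σ) (perm_toMatrix_mem_unitary σ.symm)

lemma CUIN.N_herm (Φ : CUIN 𝕜) {n : ℕ} {A : Matrix (Fin n) (Fin n) 𝕜} (hA : A.IsHermitian) :
    Φ.N n A = Φ.N n (Matrix.diagonal (fun i => ((hA.eigenvalues i : ℝ) : 𝕜))) := by
  conv_lhs => rw [hA.spectral_theorem]
  exact Φ.N_conj _ (hA.eigenvectorUnitary).2 (Unitary.star_mem (hA.eigenvectorUnitary).2)

lemma CUIN.N_diag_perm (Φ : CUIN 𝕜) {n : ℕ} (v : Fin n → ℝ) (σ : Equiv.Perm (Fin n)) :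
    Φ.N n (Matrix.diagonal (fun i => ((v (σ i) : ℝ) : 𝕜))) =
      Φ.N n (Matrix.diagonal (fun i => ((v i : ℝ) : 𝕜))) := by
  have h : Matrix.diagonal (fun i => ((v (σ i) : ℝ) : 𝕜))
      = (Matrix.diagonal (fun i => ((v i : ℝ) : 𝕜))).submatrix ⇑σ ⇑σ := by
    rw [Matrix.submatrix_diagonal_equiv]
    rfl
  rw [h, Φ.N_submatrix]

lemma CUIN.N_eq_of_charpoly (Φ : CUIN 𝕜) {n : ℕ} {A B : Matrix (Fin n) (Fin n) 𝕜}
    (hA : A.IsHermitian) (hB : B.IsHermitian) (h : A.charpoly = B.charpoly) :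
    Φ.N n A = Φ.N n B := by
  rw [Φ.N_herm hA, Φ.N_herm hB]
  obtain ⟨σ, hσ⟩ := exists_comp_perm_of_ms_eq (eig_ms_eq_of_charpoly_eq hA hB h)
  have h2 : (fun i => ((hA.eigenvalues i : ℝ) : 𝕜)) = fun i => ((hB.eigenvalues (σ i) : ℝ) : 𝕜) := by
    funext i; rw [congrFun hσ i]; rfl
  rw [h2, Φ.N_diag_perm]

lemma CUIN.N_zero (Φ : CUIN 𝕜) (n : ℕ) : Φ.N n 0 = 0 := by
  have := Φ.smul_eq n (0 : 𝕜) 0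
  simpa using this

lemma CUIN.N_smul_real (Φ : CUIN 𝕜) (n : ℕ) (r : ℝ) (A : Matrix (Fin n) (Fin n) 𝕜) :
    Φ.N n (((r : ℝ) : 𝕜) • A) = |r| * Φ.N n A := by
  rw [Φ.smul_eq n]
  rw [RCLike.norm_ofReal]

lemma CUIN.N_sum_le (Φ : CUIN 𝕜) (n : ℕ) {β : Type*} (s : Finset β)
    (f : β → Matrix (Fin n) (Fin n) 𝕜) :
    Φ.N n (∑ t ∈ s, f t) ≤ ∑ t ∈ s, Φ.N n (f t) := by
  classical
  induction s using Finset.induction_on with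
  | empty => simp [Φ.N_zero]
  | insert a s' hnotmem ih =>
    rw [Finset.sum_insert hnotmem, Finset.sum_insert hnotmem]
    exact le_trans (Φ.triangle n _ _) (by linarith)

lemma CUIN.N_recongr (Φ : CUIN 𝕜) {n n' : ℕ} (h : n = n') (A : Matrix (Fin n) (Fin n) 𝕜) :
    Φ.N n' (Matrix.reindex (finCongr h) (finCongr h) A) = Φ.N n A := by
  subst h
  simp [Matrix.reindex_refl_refl]

lemma isHermitian_reindex {ι κ : Type*} [Fintype ι] [DecidableEq ι] [Fintype κ] [DecidableEq κ]
    (e : ι ≃ κ) {A : Matrix ι ι 𝕜} (hA : A.IsHermitian) :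
    (Matrix.reindex e e A).IsHermitian := by
  rw [Matrix.IsHermitian, Matrix.reindex_apply, Matrix.conjTranspose_submatrix, hA.eq]

lemma reindex_mul {ι κ : Type*} [Fintype ι] [DecidableEq ι] [Fintype κ] [DecidableEq κ]
    (e : ι ≃ κ) (A B : Matrix ι ι 𝕜) :
    (Matrix.reindex e e A) * (Matrix.reindex e e B) = Matrix.reindex e e (A * B) := by
  rw [Matrix.reindex_apply, Matrix.reindex_apply, Matrix.reindex_apply]
  exact Matrix.submatrix_mul_equiv A B _ e.symm _

end AuxN

set_option maxHeartbeats 1600000 in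
open Matrix BigOperators Polynomial Finset in
theorem stmt8 {𝕜 : Type*} [RCLike 𝕜] (m l d : ℕ) (hm : 2 ≤ m) (hl : 0 < l) (hld : l < d)
    (hdm : d < m * l)
    (Φ : CUIN 𝕜) (V : Fin m → Matrix (Fin l) (Fin d) 𝕜)
    (huwp : IsUWP V)
    (hC : ∃ i j : Fin m, i ≠ j ∧ (l : ℝ) * cmld m l d ≤ traceAbs (V i * (V j)ᴴ)) :
    Φ.psi (Fin.append (fun _ : Fin l => (d : ℝ) / ((m : ℝ) * l) + cmld m l d)
        (fun _ : Fin l => (d : ℝ) / ((m : ℝ) * l) - cmld m l d)) ≤ errP Φ 2 V := by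
  classical
  obtain ⟨i, j, hij, hCij⟩ := hC
  haveI : NeZero l := ⟨hl.ne'⟩
  set a : ℝ := (d : ℝ) / ((m : ℝ) * l) with ha_def
  set c : ℝ := cmld m l d with hc_def
  have hl0 : (0:ℝ) < l := by exact_mod_cast hl
  have hm2 : (2:ℝ) ≤ (m:ℝ) := by exact_mod_cast hm
  have hd0 : (0:ℝ) < d := by
    have : 0 < d := lt_of_le_of_lt (Nat.zero_le l) hld
    exact_mod_cast this
  have hml : (d:ℝ) < (m:ℝ) * l := by exact_mod_cast hdm
  have hc0 : 0 < c := by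
    rw [hc_def, cmld]
    apply Real.sqrt_pos.mpr
    have h2 : (0:ℝ) < 1 - (d:ℝ)/((m:ℝ)*l) := by
      have : (d:ℝ)/((m:ℝ)*l) < 1 := (div_lt_one (by nlinarith)).mpr hml
      linarith
    have h1 : (0:ℝ) < (d:ℝ) / (((m:ℝ)-1) * m * l) := by
      apply div_pos hd0; nlinarith
    exact mul_pos h1 h2
  set M : Matrix (Fin l) (Fin l) 𝕜 := V i * (V j)ᴴ with hM_def
  set T : ℝ := traceAbs M with hT_def
  have hTc : l * c ≤ T := hCij
  have hT0 : 0 < T := lt_of_lt_of_le (by positivity) hTc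
  set sb : ℝ := T / l with hsb_def
  have hsb0 : 0 < sb := div_pos hT0 hl0
  have hcsb : c ≤ sb := by
    rw [hsb_def, le_div_iff₀ hl0]; linarith
  set aK : 𝕜 := (d : 𝕜) / ((m : 𝕜) * (l : 𝕜)) with haK_def
  have haK : aK = ((a : ℝ) : 𝕜) := by rw [haK_def, ha_def]; push_cast; ring
  -- matrices
  set A : Matrix (Fin d) (Fin d) 𝕜 := (V i)ᴴ * V i + (V j)ᴴ * V j with hA_def
  have hAh : A.IsHermitian :=
    (Matrix.isHermitian_conjTranspose_mul_self (V i)).add (Matrix.isHermitian_conjTranspose_mul_self (V j))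
  set e2 : (Fin l ⊕ Fin l) ≃ Fin (l + l) := finSumFinEquiv with he2
  set G0 : Matrix (Fin l ⊕ Fin l) (Fin l ⊕ Fin l) 𝕜 :=
    Matrix.fromBlocks (aK • 1) M Mᴴ (aK • 1) with hG0_def
  set G : Matrix (Fin (l+l)) (Fin (l+l)) 𝕜 := Matrix.reindex e2 e2 G0 with hG_def
  set W0 : Matrix (Fin l ⊕ Fin l) (Fin d) 𝕜 := Matrix.fromRows (V i) (V j) with hW0_def
  have hMH : V j * (V i)ᴴ = Mᴴ := by
    rw [hM_def, Matrix.conjTranspose_mul, Matrix.conjTranspose_conjTranspose]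
  have hWG : W0 * W0ᴴ = G0 := by
    rw [hW0_def, Matrix.conjTranspose_fromRows_eq_fromCols_conjTranspose,
      Matrix.fromRows_mul_fromCols, hG0_def, huwp.2 i, huwp.2 j, hMH, hM_def, haK_def]
  have hWA : W0ᴴ * W0 = A := by
    rw [hW0_def, Matrix.conjTranspose_fromRows_eq_fromCols_conjTranspose,
      Matrix.fromCols_mul_fromRows, hA_def]
  have hG0h : G0.IsHermitian := by
    rw [← hWG]; exact Matrix.isHermitian_mul_conjTranspose_self W0
  have hGh : G.IsHermitian := isHermitian_reindex e2 hG0h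
  -- charpoly bridge
  have hcpbridge : G0.charpoly * X ^ d = (X:𝕜[X]) ^ (l + l) * A.charpoly := by
    have h1 := _root_.charpoly_mul_comm' (Matrix.fromBlocks 0 W0 0 0 :
        Matrix ((Fin l ⊕ Fin l) ⊕ Fin d) ((Fin l ⊕ Fin l) ⊕ Fin d) 𝕜)
      ((Matrix.fromBlocks 0 W0 0 0 :
        Matrix ((Fin l ⊕ Fin l) ⊕ Fin d) ((Fin l ⊕ Fin l) ⊕ Fin d) 𝕜)ᴴ)
    have h2 : (Matrix.fromBlocks 0 W0 0 0 :
        Matrix ((Fin l ⊕ Fin l) ⊕ Fin d) ((Fin l ⊕ Fin l) ⊕ Fin d) 𝕜)ᴴ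
        = Matrix.fromBlocks 0 0 W0ᴴ 0 := by
      rw [Matrix.fromBlocks_conjTranspose]; simp
    rw [h2] at h1
    have h3 : (Matrix.fromBlocks 0 W0 0 0 : Matrix ((Fin l ⊕ Fin l) ⊕ Fin d) _ 𝕜) *
        Matrix.fromBlocks 0 0 W0ᴴ 0 = Matrix.fromBlocks G0 0 0 0 := by
      rw [Matrix.fromBlocks_multiply]; simp [hWG]
    have h4 : (Matrix.fromBlocks 0 0 W0ᴴ 0 : Matrix ((Fin l ⊕ Fin l) ⊕ Fin d) _ 𝕜) *
        Matrix.fromBlocks 0 W0 0 0 = Matrix.fromBlocks 0 0 0 A := by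
      rw [Matrix.fromBlocks_multiply]; simp [hWA]
    rw [h3, h4, Matrix.charpoly_fromBlocks_zero₁₂, Matrix.charpoly_fromBlocks_zero₁₂,
      charpoly_zero_mat, charpoly_zero_mat] at h1
    simpa using h1
  -- transfer of norms
  have hNAG : Φ.N d A = Φ.N (l + l) G := by
    have e3 : (l + l) + d = d + (l + l) := by omega
    have hPAh : (padMat (l+l) A).IsHermitian := by
      unfold padMat
      apply isHermitian_reindex
      rw [Matrix.IsHermitian, Matrix.fromBlocks_conjTranspose]
      simp [hAh.eq]
    have hPGh : (padMat d G).IsHermitian := by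
      unfold padMat
      apply isHermitian_reindex
      rw [Matrix.IsHermitian, Matrix.fromBlocks_conjTranspose]
      simp [hGh.eq]
    have hPGh' : (Matrix.reindex (finCongr e3) (finCongr e3) (padMat d G)).IsHermitian :=
      isHermitian_reindex _ hPGh
    have hcp : (padMat (l+l) A).charpoly
        = (Matrix.reindex (finCongr e3) (finCongr e3) (padMat d G)).charpoly := by
      rw [Matrix.charpoly_reindex]
      unfold padMat
      rw [Matrix.charpoly_reindex, Matrix.charpoly_reindex,
        Matrix.charpoly_fromBlocks_zero₁₂, Matrix.charpoly_fromBlocks_zero₁₂,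
        charpoly_zero_mat, charpoly_zero_mat]
      have hGcp : G.charpoly = G0.charpoly := by rw [hG_def, Matrix.charpoly_reindex]
      rw [hGcp]
      simp only [Fintype.card_fin]
      rw [mul_comm G0.charpoly] at hcpbridge
      rw [mul_comm A.charpoly, ← hcpbridge, mul_comm]
    calc Φ.N d A = Φ.N (d + (l+l)) (padMat (l+l) A) := (Φ.compatible d (l+l) A).symm
      _ = Φ.N (d + (l+l)) (Matrix.reindex (finCongr e3) (finCongr e3) (padMat d G)) :=
          Φ.N_eq_of_charpoly hPAh hPGh' hcp
      _ = Φ.N ((l+l) + d) (padMat d G) := Φ.N_recongr e3 (padMat d G)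
      _ = Φ.N (l+l) G := Φ.compatible (l+l) d G
  -- eigenvalues
  set μ : Fin (l + l) → ℝ := hGh.eigenvalues with hμ_def
  have hGU := hGh.spectral_theorem
  set U : Matrix (Fin (l+l)) (Fin (l+l)) 𝕜 := (↑hGh.eigenvectorUnitary : Matrix (Fin (l+l)) (Fin (l+l)) 𝕜) with hU_def
  have hU : U ∈ Matrix.unitaryGroup (Fin (l+l)) 𝕜 := (hGh.eigenvectorUnitary).2
  have hE1 : (Finset.univ.val.map (fun k => 2 * a - μ k) : Multiset ℝ)
      = Finset.univ.val.map μ := by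
    set J0 : Matrix (Fin l ⊕ Fin l) (Fin l ⊕ Fin l) 𝕜 := Matrix.fromBlocks 1 0 0 (-1) with hJ0_def
    set J : Matrix (Fin (l+l)) (Fin (l+l)) 𝕜 := Matrix.reindex e2 e2 J0 with hJ_def
    have hJJ : J * J = 1 := by
      rw [hJ_def, reindex_mul, hJ0_def, Matrix.fromBlocks_multiply]
      simp [Matrix.fromBlocks_one]
    have hsm : (((2*a : ℝ) : 𝕜)) • (1 : Matrix (Fin (l+l)) (Fin (l+l)) 𝕜) - G
        = Matrix.reindex e2 e2 ((((2*a : ℝ) : 𝕜)) • 1 - G0) := by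
      rw [hG_def]
      ext p q
      simp only [Matrix.reindex_apply, Matrix.submatrix_apply, Matrix.sub_apply,
        Matrix.smul_apply, Matrix.one_apply, EmbeddingLike.apply_eq_iff_eq]
    have hJGJ : J * G * J = (((2*a : ℝ) : 𝕜)) • 1 - G := by
      rw [hsm, hJ_def, hG_def, reindex_mul, reindex_mul]
      congr 1
      rw [hJ0_def, hG0_def, Matrix.fromBlocks_multiply, Matrix.fromBlocks_multiply]
      ext p q
      rcases p with p | p <;> rcases q with q | q <;>
        by_cases hpq : p = q <;>
        simp [Matrix.sub_apply, Matrix.smul_apply, Matrix.one_apply, Matrix.diagonal_apply,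
          hpq, haK, smul_eq_mul] <;>
        simp [Algebra.smul_def] <;> push_cast <;> ring
    have hsame : ((((2*a : ℝ) : 𝕜)) • 1 - G).charpoly = G.charpoly := by
      rw [← hJGJ, Matrix.mul_assoc, _root_.charpoly_mul_comm', Matrix.mul_assoc, hJJ, Matrix.mul_one]
    have hGdiag : (((2*a : ℝ) : 𝕜)) • (1 : Matrix (Fin (l+l)) (Fin (l+l)) 𝕜) - G
        = U * (Matrix.diagonal fun k => (((2*a - μ k : ℝ)) : 𝕜)) * star U := by
      conv_lhs => rw [hGU]
      have hUU : U * star U = 1 := Matrix.mem_unitaryGroup_iff.mp hU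
      have h1 : (((2*a : ℝ) : 𝕜)) • (1 : Matrix (Fin (l+l)) (Fin (l+l)) 𝕜)
          = U * ((((2*a : ℝ) : 𝕜)) • 1) * star U := by
        rw [Matrix.mul_smul, Matrix.mul_one, Matrix.smul_mul, hUU]
      rw [Unitary.conjStarAlgAut_apply, ← hU_def]
      rw [h1, ← Matrix.sub_mul, ← Matrix.mul_sub]
      congr 2
      have hs1 : (((2*a : ℝ) : 𝕜)) • (1 : Matrix (Fin (l+l)) (Fin (l+l)) 𝕜)
          = Matrix.diagonal (fun _ => ((2*a : ℝ) : 𝕜)) := by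
        ext p q
        by_cases hpq : p = q <;>
          simp [hpq, Matrix.one_apply, Matrix.smul_apply, smul_eq_mul]
      rw [hs1, Matrix.diagonal_sub]
      congr 1
      funext k
      rw [hμ_def]
      simp only [Function.comp_apply]
      push_cast
      ring
    have hfin : (Matrix.diagonal fun k => (((2*a - μ k : ℝ)) : 𝕜)).charpoly = G.charpoly := by
      rw [← hsame, hGdiag, charpoly_conj_unitary _ hU]
    apply cpRR_inj (𝕜 := 𝕜)
    rw [← charpoly_diagonal_real (𝕜 := 𝕜) (v := fun k => 2*a - μ k), hfin, hμ_def]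
    exact charpoly_isHermitian' hGh
  have hMMh : (M * Mᴴ).IsHermitian := Matrix.isHermitian_mul_conjTranspose_self M
  have hMhMh : (Mᴴ * M).IsHermitian := (Matrix.posSemidef_conjTranspose_mul_self M).1
  have hE2 : ∑ k, |μ k - a| = 2 * T := by
    set B : Matrix (Fin (l+l)) (Fin (l+l)) 𝕜 := G - aK • 1 with hB_def
    have hsub : ∀ (X Y : Matrix (Fin l ⊕ Fin l) (Fin l ⊕ Fin l) 𝕜),
        Matrix.reindex e2 e2 X - Matrix.reindex e2 e2 Y = Matrix.reindex e2 e2 (X - Y) :=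
      fun X Y => rfl
    have hone2 : (aK • 1 : Matrix (Fin (l+l)) (Fin (l+l)) 𝕜) = Matrix.reindex e2 e2 (aK • 1) := by
      rw [Matrix.reindex_apply]
      have h0 : ((aK • (1 : Matrix (Fin l ⊕ Fin l) (Fin l ⊕ Fin l) 𝕜)).submatrix ⇑e2.symm ⇑e2.symm)
          = aK • ((1 : Matrix (Fin l ⊕ Fin l) (Fin l ⊕ Fin l) 𝕜).submatrix ⇑e2.symm ⇑e2.symm) := rfl
      rw [h0, Matrix.submatrix_one_equiv]
    have hblocks : G0 - aK • 1 = Matrix.fromBlocks 0 M Mᴴ 0 := by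
      rw [hG0_def]
      ext p q
      rcases p with p | p <;> rcases q with q | q <;>
        [skip; skip; skip; skip] <;>
        first
        | (by_cases hpq : p = q <;> simp [Matrix.sub_apply, Matrix.smul_apply, Matrix.one_apply, hpq])
        | simp [Matrix.sub_apply, Matrix.smul_apply, Matrix.one_apply]
    have hB0 : B = Matrix.reindex e2 e2 (Matrix.fromBlocks 0 M Mᴴ 0) := by
      rw [hB_def, hG_def, hone2, hsub, hblocks]
    have hBB : B * B = Matrix.reindex e2 e2 (Matrix.fromBlocks (M * Mᴴ) 0 0 (Mᴴ * M)) := by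
      rw [hB0, reindex_mul]
      congr 1
      rw [Matrix.fromBlocks_multiply]
      simp
    have hcpB : (B*B).charpoly
        = cpRR 𝕜 (Finset.univ.val.map hMMh.eigenvalues + Finset.univ.val.map hMhMh.eigenvalues) := by
      rw [hBB, Matrix.charpoly_reindex, Matrix.charpoly_fromBlocks_zero₁₂, cpRR_add,
        charpoly_isHermitian' hMMh, charpoly_isHermitian' hMhMh]
    have hBU : B = U * (Matrix.diagonal fun k => (((μ k - a : ℝ)) : 𝕜)) * star U := by
      rw [hB_def]
      conv_lhs => rw [hGU]
      have hUU : U * star U = 1 := Matrix.mem_unitaryGroup_iff.mp hU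
      have h1 : aK • (1 : Matrix (Fin (l+l)) (Fin (l+l)) 𝕜) = U * (aK • 1) * star U := by
        rw [Matrix.mul_smul, Matrix.mul_one, Matrix.smul_mul, hUU]
      rw [Unitary.conjStarAlgAut_apply, ← hU_def]
      rw [h1, ← Matrix.sub_mul, ← Matrix.mul_sub]
      congr 2
      have hs1 : aK • (1 : Matrix (Fin (l+l)) (Fin (l+l)) 𝕜)
          = Matrix.diagonal (fun _ => ((a : ℝ) : 𝕜)) := by
        ext p q
        by_cases hpq : p = q <;>
          simp [hpq, Matrix.one_apply, Matrix.smul_apply, smul_eq_mul, haK]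
      rw [hs1, Matrix.diagonal_sub]
      congr 1
      funext k
      rw [hμ_def]
      simp only [Function.comp_apply]
      push_cast
      ring
    have hcpB2 : (B*B).charpoly = cpRR 𝕜 (Finset.univ.val.map (fun k => (μ k - a)^2)) := by
      rw [hBU]
      have hUU' : star U * U = 1 := Matrix.mem_unitaryGroup_iff'.mp hU
      have h2 : (U * (Matrix.diagonal fun k => (((μ k - a : ℝ)) : 𝕜)) * star U)
            * (U * (Matrix.diagonal fun k => (((μ k - a : ℝ)) : 𝕜)) * star U)
          = U * ((Matrix.diagonal fun k => (((μ k - a : ℝ)) : 𝕜))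
            * (Matrix.diagonal fun k => (((μ k - a : ℝ)) : 𝕜))) * star U := by
        have h2a : star U * (U * ((Matrix.diagonal fun k => (((μ k - a : ℝ)) : 𝕜)) * star U))
            = (Matrix.diagonal fun k => (((μ k - a : ℝ)) : 𝕜)) * star U := by
          rw [← Matrix.mul_assoc, hUU', Matrix.one_mul]
        simp only [Matrix.mul_assoc]
        rw [h2a]
      rw [h2, charpoly_conj_unitary _ hU, Matrix.diagonal_mul_diagonal]
      have h3 : (fun k => (((μ k - a : ℝ)) : 𝕜) * (((μ k - a : ℝ)) : 𝕜))
          = fun k => ((((μ k - a)^2 : ℝ)) : 𝕜) := by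
        funext k; push_cast; ring
      rw [h3, charpoly_diagonal_real]
    have hms : (Finset.univ.val.map (fun k => (μ k - a)^2) : Multiset ℝ)
        = Finset.univ.val.map hMMh.eigenvalues + Finset.univ.val.map hMhMh.eigenvalues :=
      cpRR_inj (𝕜 := 𝕜) (by rw [← hcpB2, hcpB])
    have hsum : ∑ k, Real.sqrt ((μ k - a)^2)
        = (∑ k, Real.sqrt (hMMh.eigenvalues k)) + ∑ k, Real.sqrt (hMhMh.eigenvalues k) := by
      have e1 : ∑ k, Real.sqrt ((μ k - a)^2)
          = ((Finset.univ.val.map (fun k => (μ k - a)^2)).map Real.sqrt).sum := by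
        rw [Multiset.map_map]; rfl
      have e2' : ∀ {κ : Type} [inst : Fintype κ] (v : κ → ℝ), (∑ k, Real.sqrt (v k))
          = ((Finset.univ.val.map v).map Real.sqrt).sum := by
        intro κ inst v; rw [Multiset.map_map]; rfl
      rw [e1, hms, Multiset.map_add, Multiset.sum_add, e2' hMMh.eigenvalues, e2' hMhMh.eigenvalues]
    have hTA : T = ∑ k, Real.sqrt (hMhMh.eigenvalues k) := rfl
    have hTB : ∑ k, Real.sqrt (hMMh.eigenvalues k) = ∑ k, Real.sqrt (hMhMh.eigenvalues k) := by
      have hmseq := eig_ms_eq_of_charpoly_eq hMMh hMhMh (charpoly_mul_comm' M Mᴴ)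
      have e2' : ∀ (v : Fin l → ℝ), (∑ k, Real.sqrt (v k))
          = ((Finset.univ.val.map v).map Real.sqrt).sum := by
        intro v; rw [Multiset.map_map]; rfl
      rw [e2' hMMh.eigenvalues, e2' hMhMh.eigenvalues, hmseq]
    have habs : ∀ k, |μ k - a| = Real.sqrt ((μ k - a)^2) :=
      fun k => (Real.sqrt_sq_eq_abs _).symm
    calc ∑ k, |μ k - a| = ∑ k, Real.sqrt ((μ k - a)^2) :=
          Finset.sum_congr rfl (fun k _ => habs k)
      _ = (∑ k, Real.sqrt (hMMh.eigenvalues k)) + ∑ k, Real.sqrt (hMhMh.eigenvalues k) := hsum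
      _ = 2 * T := by rw [hTB, ← hTA]; ring
  -- sorting
  set σs : Equiv.Perm (Fin (l+l)) := Tuple.sort μ with hσs_def
  set ν : Fin (l+l) → ℝ := μ ∘ ⇑σs with hν_def
  have hmono : Monotone ν := Tuple.monotone_sort μ
  have hpair : ∀ k : Fin (l+l), ν k + ν k.rev = 2 * a := by
    have hw : Monotone (fun k : Fin (l+l) => 2*a - ν k.rev) := by
      intro x y hxy
      simp only
      have := hmono (Fin.rev_le_rev.mpr hxy)
      linarith
    have hmsw : (Finset.univ.val.map (fun k : Fin (l+l) => 2*a - ν k.rev) : Multiset ℝ)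
        = Finset.univ.val.map ν := by
      have s1 : (Finset.univ.val.map (fun k : Fin (l+l) => 2*a - ν k.rev) : Multiset ℝ)
          = Finset.univ.val.map (fun k : Fin (l+l) => 2*a - ν k) :=
        ms_comp_perm (fun k : Fin (l+l) => 2*a - ν k) Fin.revPerm
      have s2 : (Finset.univ.val.map (fun k : Fin (l+l) => 2*a - ν k) : Multiset ℝ)
          = Finset.univ.val.map (fun k : Fin (l+l) => 2*a - μ k) := by
        rw [hν_def]
        exact ms_comp_perm (fun k : Fin (l+l) => 2*a - μ k) σs
      have s3 : (Finset.univ.val.map ν : Multiset ℝ) = Finset.univ.val.map μ := by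
        rw [hν_def]
        exact ms_comp_perm μ σs
      rw [s1, s2, hE1, ← s3]
    have heq := monotone_eq_of_ms_eq hmono hw hmsw.symm
    intro k
    have h2 : ν k = 2*a - ν k.rev := congrFun heq k
    linarith
  have hrevcast : ∀ k : Fin l, (Fin.castAdd l k).rev = Fin.natAdd l (k.rev) := by
    intro k; ext; simp [Fin.val_rev]; omega
  have hle1 : ∀ k : Fin l, ν (Fin.castAdd l k) ≤ a := by
    intro k
    have h1 : (Fin.castAdd l k) ≤ (Fin.castAdd l k).rev := by
      rw [Fin.le_def, Fin.val_rev]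
      simp only [Fin.coe_castAdd]
      omega
    have h2 := hmono h1
    have hp := hpair (Fin.castAdd l k)
    linarith
  have hge1 : ∀ k : Fin l, a ≤ ν (Fin.natAdd l k) := by
    intro k
    have h1 : (Fin.natAdd l k).rev ≤ (Fin.natAdd l k) := by
      rw [Fin.le_def, Fin.val_rev]
      simp only [Fin.coe_natAdd]
      omega
    have h2 := hmono h1
    have hp := hpair (Fin.natAdd l k)
    linarith
  set Sp : ℝ := ∑ k : Fin l, ν (Fin.natAdd l k) with hSp_def
  have hSm : ∑ k : Fin l, ν (Fin.castAdd l k) = 2*l*a - Sp := by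
    have h1 : ∀ k : Fin l, ν (Fin.castAdd l k) = 2*a - ν (Fin.natAdd l (k.rev)) := by
      intro k
      have := hpair (Fin.castAdd l k)
      rw [hrevcast k] at this
      linarith
    rw [Finset.sum_congr rfl (fun k _ => h1 k), Finset.sum_sub_distrib]
    have h2 : ∑ k : Fin l, ν (Fin.natAdd l k.rev) = Sp := by
      rw [hSp_def]
      exact Equiv.sum_comp Fin.revPerm (fun u => ν (Fin.natAdd l u))
    rw [h2]
    simp [Finset.card_univ, mul_comm]
    ring
  have hSp : Sp = l * a + T := by
    have hsplit := Fin.sum_univ_add (fun k : Fin (l+l) => |ν k - a|)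
    have habs1 : ∀ k : Fin l, |ν (Fin.castAdd l k) - a| = a - ν (Fin.castAdd l k) := by
      intro k; rw [abs_of_nonpos (by linarith [hle1 k])]; ring
    have habs2 : ∀ k : Fin l, |ν (Fin.natAdd l k) - a| = ν (Fin.natAdd l k) - a := by
      intro k; rw [abs_of_nonneg (by linarith [hge1 k])]
    have hperm : ∑ k, |ν k - a| = 2 * T := by
      have h := Equiv.sum_comp σs (fun k => |μ k - a|)
      calc ∑ k, |ν k - a| = ∑ k, |μ k - a| := h
        _ = 2 * T := hE2
    rw [hperm] at hsplit
    rw [Finset.sum_congr rfl (fun k _ => habs1 k), Finset.sum_congr rfl (fun k _ => habs2 k)] at hsplit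
    have hconst : (∑ _k : Fin l, a) = l * a := by
      rw [Finset.sum_const, Finset.card_univ, Fintype.card_fin, nsmul_eq_mul]
    rw [Finset.sum_sub_distrib, Finset.sum_sub_distrib, hSm, hconst, ← hSp_def] at hsplit
    linarith
  -- reduction to diagonal of ν
  have hNG : Φ.N (l+l) G = Φ.N (l+l) (Matrix.diagonal fun k => ((ν k : ℝ) : 𝕜)) := by
    rw [Φ.N_herm hGh]
    exact (Φ.N_diag_perm μ σs).symm
  -- averaging 1 : constant a
  have hkey1 : Φ.N (l+l) (Matrix.diagonal fun _ : Fin (l+l) => ((a : ℝ) : 𝕜))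
      ≤ Φ.N (l+l) (Matrix.diagonal fun k => ((ν k : ℝ) : 𝕜)) := by
    have hdec : (Matrix.diagonal fun _ : Fin (l+l) => ((a : ℝ) : 𝕜))
        = (((1/2 : ℝ)) : 𝕜) • (Matrix.diagonal fun k => ((ν k : ℝ) : 𝕜))
          + (((1/2 : ℝ)) : 𝕜) • (Matrix.diagonal fun k => ((ν (Fin.revPerm k) : ℝ) : 𝕜)) := by
      ext p q
      by_cases hpq : p = q
      · subst hpq
        simp only [Matrix.diagonal_apply_eq, Matrix.add_apply, Matrix.smul_apply, smul_eq_mul]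
        have hrev : ν (Fin.revPerm p) = 2*a - ν p := by
          have := hpair p
          have h0 : ν (Fin.revPerm p) = ν p.rev := rfl
          rw [h0]; linarith
        rw [hrev]
        push_cast
        ring
      · simp [Matrix.diagonal_apply_ne _ hpq, hpq]
    rw [hdec]
    refine le_trans (Φ.triangle (l+l) _ _) ?_
    rw [Φ.N_smul_real, Φ.N_smul_real, Φ.N_diag_perm ν Fin.revPerm,
      abs_of_nonneg (by norm_num : (0:ℝ) ≤ 1/2)]
    linarith [Φ.nonneg (l+l) (Matrix.diagonal fun k => ((ν k : ℝ) : 𝕜))]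
  -- averaging 2 : append (a - sb) (a + sb)
  have hkey2 : Φ.N (l+l) (Matrix.diagonal fun k =>
        (((Fin.append (fun _ : Fin l => a - sb) (fun _ : Fin l => a + sb)) k : ℝ) : 𝕜))
      ≤ Φ.N (l+l) (Matrix.diagonal fun k => ((ν k : ℝ) : 𝕜)) := by
    set πt : Fin l → Equiv.Perm (Fin (l+l)) := fun t =>
      (e2.symm.trans ((Equiv.sumCongr (Equiv.addRight t) (Equiv.addRight t)).trans e2)) with hπt_def
    have hπcast : ∀ (t k : Fin l), πt t (Fin.castAdd l k) = Fin.castAdd l (k + t) := by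
      intro t k
      rw [hπt_def, he2]
      simp
    have hπnat : ∀ (t k : Fin l), πt t (Fin.natAdd l k) = Fin.natAdd l (k + t) := by
      intro t k
      rw [hπt_def, he2]
      simp only [Equiv.trans_apply, Equiv.sumCongr_apply, finSumFinEquiv_symm_apply_natAdd,
        Sum.map_inr, finSumFinEquiv_apply_right, Equiv.coe_addRight]
    have hdec : (Matrix.diagonal fun k =>
          (((Fin.append (fun _ : Fin l => a - sb) (fun _ : Fin l => a + sb)) k : ℝ) : 𝕜))
        = (((l : ℝ)⁻¹ : ℝ) : 𝕜) •
            ∑ t : Fin l, Matrix.diagonal (fun k => ((ν (πt t k) : ℝ) : 𝕜)) := by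
      ext p q
      by_cases hpq : p = q
      · subst hpq
        simp only [Matrix.diagonal_apply_eq, Matrix.smul_apply, Matrix.sum_apply, smul_eq_mul]
        have hcast : (∑ t : Fin l, ((ν (πt t p) : ℝ) : 𝕜))
            = (((∑ t : Fin l, ν (πt t p) : ℝ)) : 𝕜) := by
          push_cast
          rfl
        rw [hcast]
        induction p using Fin.addCases with
        | left k =>
          rw [Fin.append_left]
          have hsum : ∑ t : Fin l, ν (πt t (Fin.castAdd l k)) = l * a - T := by
            rw [Finset.sum_congr rfl fun t _ => by rw [hπcast t k]]
            have hcomp : ∑ t : Fin l, ν (Fin.castAdd l (k + t))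
                = ∑ u : Fin l, ν (Fin.castAdd l u) :=
              Equiv.sum_comp (Equiv.addLeft k) (fun u : Fin l => ν (Fin.castAdd l u))
            rw [hcomp, hSm, hSp]
            ring
          rw [Finset.sum_congr rfl fun t _ => by rw [hπcast t k]] at hsum ⊢
          rw [hsum]
          rw [hsb_def]
          push_cast
          field_simp
        | right k =>
          rw [Fin.append_right]
          have hsum : ∑ t : Fin l, ν (πt t (Fin.natAdd l k)) = l * a + T := by
            rw [Finset.sum_congr rfl fun t _ => by rw [hπnat t k]]
            have hcomp : ∑ t : Fin l, ν (Fin.natAdd l (k + t))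
                = ∑ u : Fin l, ν (Fin.natAdd l u) :=
              Equiv.sum_comp (Equiv.addLeft k) (fun u : Fin l => ν (Fin.natAdd l u))
            rw [hcomp, ← hSp_def, hSp]
          rw [Finset.sum_congr rfl fun t _ => by rw [hπnat t k]] at hsum ⊢
          rw [hsum]
          rw [hsb_def]
          push_cast
          field_simp
      · simp [Matrix.diagonal_apply_ne _ hpq, hpq, Matrix.sum_apply]
    rw [hdec, Φ.N_smul_real, abs_of_nonneg (by positivity : (0:ℝ) ≤ (l:ℝ)⁻¹)]
    have hN2 : Φ.N (l+l) (∑ t : Fin l, Matrix.diagonal (fun k => ((ν (πt t k) : ℝ) : 𝕜)))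
        ≤ ∑ t : Fin l, Φ.N (l+l) (Matrix.diagonal (fun k => ((ν (πt t k) : ℝ) : 𝕜))) :=
      Φ.N_sum_le (l+l) Finset.univ _
    have hN3 : ∀ t : Fin l, Φ.N (l+l) (Matrix.diagonal (fun k => ((ν (πt t k) : ℝ) : 𝕜)))
        = Φ.N (l+l) (Matrix.diagonal (fun k => ((ν k : ℝ) : 𝕜))) := fun t => Φ.N_diag_perm ν (πt t)
    have hN4 : (∑ t : Fin l, Φ.N (l+l) (Matrix.diagonal (fun k => ((ν (πt t k) : ℝ) : 𝕜))))
        = l * Φ.N (l+l) (Matrix.diagonal (fun k => ((ν k : ℝ) : 𝕜))) := by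
      rw [Finset.sum_congr rfl fun t _ => hN3 t, Finset.sum_const, Finset.card_univ,
        Fintype.card_fin, nsmul_eq_mul]
    calc (l:ℝ)⁻¹ * Φ.N (l+l) (∑ t : Fin l, Matrix.diagonal (fun k => ((ν (πt t k) : ℝ) : 𝕜)))
        ≤ (l:ℝ)⁻¹ * ∑ t : Fin l, Φ.N (l+l) (Matrix.diagonal (fun k => ((ν (πt t k) : ℝ) : 𝕜))) :=
          mul_le_mul_of_nonneg_left hN2 (by positivity)
      _ = Φ.N (l+l) (Matrix.diagonal (fun k => ((ν k : ℝ) : 𝕜))) := by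
          rw [hN4]
          field_simp
  -- final combination
  have hfinal : Φ.psi (Fin.append (fun _ : Fin l => a + c) (fun _ : Fin l => a - c))
      ≤ Φ.N (l+l) (Matrix.diagonal fun k => ((ν k : ℝ) : 𝕜)) := by
    set θ : ℝ := c / sb with hθ_def
    have hθ0 : 0 ≤ θ := le_of_lt (div_pos hc0 hsb0)
    have hθ1 : θ ≤ 1 := (div_le_one hsb0).mpr hcsb
    have hθsb : θ * sb = c := div_mul_cancel₀ c (ne_of_gt hsb0)
    set x' : Fin (l+l) → ℝ := Fin.append (fun _ : Fin l => a - c) (fun _ : Fin l => a + c)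
      with hx'_def
    have hdec : (Matrix.diagonal fun k => ((x' k : ℝ) : 𝕜))
        = ((θ : ℝ) : 𝕜) • (Matrix.diagonal fun k =>
            (((Fin.append (fun _ : Fin l => a - sb) (fun _ : Fin l => a + sb)) k : ℝ) : 𝕜))
          + (((1 - θ : ℝ)) : 𝕜) • (Matrix.diagonal fun _ : Fin (l+l) => ((a : ℝ) : 𝕜)) := by
      ext p q
      by_cases hpq : p = q
      · subst hpq
        simp only [Matrix.diagonal_apply_eq, Matrix.add_apply, Matrix.smul_apply, smul_eq_mul]
        induction p using Fin.addCases with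
        | left k =>
          rw [show x' (Fin.castAdd l k) = a - c from by rw [hx'_def]; exact Fin.append_left _ _ k,
            Fin.append_left]
          rw [show (a:ℝ) - c = θ*(a - sb) + (1-θ)*a from by rw [← hθsb]; ring]
          push_cast
          ring
        | right k =>
          rw [show x' (Fin.natAdd l k) = a + c from by rw [hx'_def]; exact Fin.append_right _ _ k,
            Fin.append_right]
          rw [show (a:ℝ) + c = θ*(a + sb) + (1-θ)*a from by rw [← hθsb]; ring]
          push_cast
          ring
      · simp [Matrix.diagonal_apply_ne _ hpq, hpq]
    set sp : Equiv.Perm (Fin (l+l)) :=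
      (e2.symm.trans ((Equiv.sumComm (Fin l) (Fin l)).trans e2)) with hsp_def
    have hxx' : (fun k : Fin (l+l) =>
          (((Fin.append (fun _ : Fin l => a + c) (fun _ : Fin l => a - c)) k : ℝ) : 𝕜))
        = fun k => ((x' (sp k) : ℝ) : 𝕜) := by
      funext k
      induction k using Fin.addCases with
      | left k' =>
        rw [Fin.append_left]
        have hs : sp (Fin.castAdd l k') = Fin.natAdd l k' := by
          rw [hsp_def, he2]; simp
        rw [hs, show x' (Fin.natAdd l k') = a + c from by
          rw [hx'_def]; exact Fin.append_right _ _ k']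
      | right k' =>
        rw [Fin.append_right]
        have hs : sp (Fin.natAdd l k') = Fin.castAdd l k' := by
          rw [hsp_def, he2]
          simp only [Equiv.trans_apply, Equiv.sumComm_apply, finSumFinEquiv_symm_apply_natAdd,
            Sum.swap_inr, finSumFinEquiv_apply_left]
        rw [hs, show x' (Fin.castAdd l k') = a - c from by
          rw [hx'_def]; exact Fin.append_left _ _ k']
    have hψ : Φ.psi (Fin.append (fun _ : Fin l => a + c) (fun _ : Fin l => a - c))
        = Φ.N (l+l) (Matrix.diagonal fun k => ((x' (sp k) : ℝ) : 𝕜)) := by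
      simp only [CUIN.psi]
      rw [hxx']
    rw [hψ, Φ.N_diag_perm x' sp, hdec]
    refine le_trans (Φ.triangle (l+l) _ _) ?_
    rw [Φ.N_smul_real, Φ.N_smul_real, abs_of_nonneg hθ0, abs_of_nonneg (by linarith : (0:ℝ) ≤ 1-θ)]
    have h1 := mul_le_mul_of_nonneg_left hkey2 hθ0
    have h2 := mul_le_mul_of_nonneg_left hkey1 (by linarith : (0:ℝ) ≤ 1-θ)
    linarith
  -- errP
  have herr : Φ.N d A ≤ errP Φ 2 V := by
    apply le_csSup
    · apply Set.Finite.bddAbove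
      apply Set.Finite.subset
        (Set.finite_range (fun K : Finset (Fin m) => Φ.N d (∑ k ∈ K, (V k)ᴴ * V k)))
      rintro r ⟨K, _, rfl⟩
      exact ⟨K, rfl⟩
    · refine ⟨{i, j}, Finset.card_pair hij, ?_⟩
      rw [Finset.sum_pair hij, hA_def]
  calc Φ.psi (Fin.append (fun _ : Fin l => a + c) (fun _ : Fin l => a - c))
      ≤ Φ.N (l+l) (Matrix.diagonal fun k => ((ν k : ℝ) : 𝕜)) := hfinal
    _ = Φ.N (l+l) G := hNG.symm
    _ = Φ.N d A := hNAG.symm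
    _ ≤ errP Φ 2 V := herr
end

section
/- Let ‖·‖ be a compatible unitarily invariant norm with associated symmetric gauge function ψ. If {V_i}_{i=1}^m is a uniformly weighted projective rank-l (m,l,d)-protocol such that V_i V_j* = c_{m,l,d}·Q_{ij} for unitary operators Q_{ij} on 𝔽^l for all i ≠ j, then max_{i≠j} tr(|V_i V_j*|) ≥ l·c_{m,l,d} and e_2^ψ(V) = ψ( ((d/(ml)) + c_{m,l,d})·e_l , ((d/(ml)) − c_{m,l,d})·e_l ). -/
open Matrix BigOperators
open scoped ComplexOrder

section Helpers
variable {𝕜 : Type*} [RCLike 𝕜]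

lemma eig_scalar {n : ℕ} (r : ℝ) (A : Matrix (Fin n) (Fin n) 𝕜) (hA : A.IsHermitian)
    (h : A = (r : 𝕜) • 1) (j : Fin n) : hA.eigenvalues j = r := by
  set U := (hA.eigenvectorUnitary : Matrix (Fin n) (Fin n) 𝕜) with hUdef
  have hU1 : star U * U = 1 := Matrix.mem_unitaryGroup_iff'.mp hA.eigenvectorUnitary.2
  have hdiag : star U * A * U = Matrix.diagonal (RCLike.ofReal ∘ hA.eigenvalues) := by
    have h' := hA.conjStarAlgAut_star_eigenvectorUnitary
    rw [Unitary.conjStarAlgAut_star_apply] at h'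
    exact h'
  have h2 : star U * ((r : 𝕜) • 1) * U = Matrix.diagonal (RCLike.ofReal ∘ hA.eigenvalues) := by
    rw [← h]; exact hdiag
  rw [Matrix.mul_smul, Matrix.smul_mul, mul_one, hU1] at h2
  have := congrFun (congrFun h2.symm j) j
  simp [Matrix.diagonal_apply_eq, Matrix.smul_apply, Matrix.one_apply_eq] at this
  exact_mod_cast this

lemma CUIN.norm_conj (Φ : CUIN 𝕜) {n : ℕ} (A U : Matrix (Fin n) (Fin n) 𝕜)
    (hU : U ∈ Matrix.unitaryGroup (Fin n) 𝕜) :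
    Φ.N n (star U * A * U) = Φ.N n A :=
  Φ.invariant n A ⟨star U, Unitary.star_mem hU⟩ ⟨U, hU⟩

end Helpers
section Helpers2
variable {𝕜 : Type*} [RCLike 𝕜]

lemma diag_padVec_eq {k t : ℕ} (x : Fin k → ℝ) :
    (Matrix.diagonal fun j : Fin (k + t) => ((padVec (k + t) x j : ℝ) : 𝕜))
      = padMat t (Matrix.diagonal fun p => (x p : 𝕜)) := by
  unfold padMat
  rw [show (0 : Matrix (Fin t) (Fin t) 𝕜) = Matrix.diagonal (fun _ => 0) by simp,
    Matrix.fromBlocks_diagonal, Matrix.reindex_apply, Matrix.submatrix_diagonal_equiv]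
  apply congrArg Matrix.diagonal
  funext j
  rcases h : finSumFinEquiv.symm j with p | q
  · have hj : j = Fin.castAdd t p := by
      have := (Equiv.symm_apply_eq finSumFinEquiv).mp h
      simpa using this
    subst hj
    simp [padVec, h, p.isLt]
  · have hj : j = Fin.natAdd k q := by
      have := (Equiv.symm_apply_eq finSumFinEquiv).mp h
      simpa using this
    subst hj
    have h2 : ¬ ((Fin.natAdd k q : Fin (k+t)) : ℕ) < k := by simp
    simp [padVec, h2, h]

lemma CUIN.pad_norm (Φ : CUIN 𝕜) {k t : ℕ} (x : Fin k → ℝ) :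
    Φ.N (k + t) (Matrix.diagonal fun j => ((padVec (k + t) x j : ℝ) : 𝕜))
      = Φ.N k (Matrix.diagonal fun p => (x p : 𝕜)) := by
  rw [diag_padVec_eq, Φ.compatible]

end Helpers2
section Helpers3
variable {𝕜 : Type*} [RCLike 𝕜]

open scoped InnerProductSpace in
lemma key_conj {k d : ℕ} (hkd : k ≤ d) (M : Matrix (Fin d) (Fin k) 𝕜)
    (hM : Mᴴ * M = 1) (x : Fin k → ℝ) :
    ∃ U ∈ Matrix.unitaryGroup (Fin d) 𝕜,
      star U * (M * Matrix.diagonal (fun p => (x p : 𝕜)) * Mᴴ) * U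
        = Matrix.diagonal (fun j => ((padVec d x j : ℝ) : 𝕜)) := by
  classical
  let emb : Fin k → Fin d := Fin.castLE hkd
  have hemb : Function.Injective emb := Fin.castLE_injective hkd
  -- the columns of M, as vectors of Euclidean space
  let v₂ : Fin k → EuclideanSpace 𝕜 (Fin d) :=
    fun p => (WithLp.equiv 2 (Fin d → 𝕜)).symm (fun j => M j p)
  have hinner : ∀ p q : Fin k, ⟪v₂ p, v₂ q⟫_𝕜 = if p = q then 1 else 0 := by
    intro p q
    have h1 : (Mᴴ * M) p q = (1 : Matrix (Fin k) (Fin k) 𝕜) p q := by rw [hM]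
    rw [Matrix.mul_apply, Matrix.one_apply] at h1
    rw [PiLp.inner_apply]
    simpa [v₂, Matrix.conjTranspose_apply, RCLike.inner_apply', mul_comm] using h1
  have horth : Orthonormal 𝕜 v₂ := orthonormal_iff_ite.mpr hinner
  -- extend to an orthonormal basis
  let v : Fin d → EuclideanSpace 𝕜 (Fin d) :=
    fun i => if h : (i : ℕ) < k then v₂ ⟨i, h⟩ else 0
  have hrest : Orthonormal 𝕜 (({i : Fin d | (i : ℕ) < k}).restrict v) := by
    have : ({i : Fin d | (i : ℕ) < k}).restrict v
        = v₂ ∘ (fun i : {i : Fin d | (i : ℕ) < k} => (⟨(i : Fin d), i.2⟩ : Fin k)) := by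
      funext i
      simp only [Set.restrict_apply, Function.comp_apply, v]
      exact dif_pos i.2
    rw [this]
    exact horth.comp _ (fun a b hab => by
      apply Subtype.ext; apply Fin.ext
      exact congrArg (fun z : Fin k => (z : ℕ)) hab)
  obtain ⟨b, hb⟩ := hrest.exists_orthonormalBasis_extension_of_card_eq
    (by simp)
  -- the unitary whose columns are the basis vectors
  set U : Matrix (Fin d) (Fin d) 𝕜 := Matrix.of (fun j i => b i j) with hU
  have hbi : ∀ i i' : Fin d, ⟪b i, b i'⟫_𝕜 = if i = i' then 1 else 0 :=
    orthonormal_iff_ite.mp b.orthonormal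
  have hUunit : U ∈ Matrix.unitaryGroup (Fin d) 𝕜 := by
    rw [Matrix.mem_unitaryGroup_iff']
    ext i i'
    rw [Matrix.star_eq_conjTranspose, Matrix.mul_apply, Matrix.one_apply]
    rw [← hbi i i', PiLp.inner_apply]
    simp [Matrix.conjTranspose_apply, RCLike.inner_apply', hU, mul_comm]
  refine ⟨U, hUunit, ?_⟩
  -- b at embedded indices recovers columns of M
  have hbemb : ∀ p : Fin k, b (emb p) = v₂ p := by
    intro p
    have h1 : ((emb p : Fin d) : ℕ) < k := by simpa [emb] using p.isLt
    have h2 : (⟨((emb p : Fin d) : ℕ), h1⟩ : Fin k) = p := by ext; simp [emb]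
    rw [hb (emb p) h1]
    simp only [v]
    rw [dif_pos h1, h2]
  -- the matrix R = Mᴴ U is an indicator matrix
  have hR : ∀ (p : Fin k) (i : Fin d),
      (Mᴴ * U) p i = if emb p = i then 1 else 0 := by
    intro p i
    have : (Mᴴ * U) p i = ⟪v₂ p, b i⟫_𝕜 := by
      rw [Matrix.mul_apply, PiLp.inner_apply]
      simp [Matrix.conjTranspose_apply, RCLike.inner_apply', hU, v₂, mul_comm]
    rw [this, ← hbemb p, hbi]
  -- now compute
  have hsUM : star U * M = (Mᴴ * U)ᴴ := by
    rw [Matrix.conjTranspose_mul, Matrix.conjTranspose_conjTranspose,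
      Matrix.star_eq_conjTranspose]
  have hassoc : star U * (M * Matrix.diagonal (fun p => (x p : 𝕜)) * Mᴴ) * U
      = (Mᴴ * U)ᴴ * (Matrix.diagonal (fun p => (x p : 𝕜)) * (Mᴴ * U)) := by
    rw [← hsUM]; simp only [Matrix.mul_assoc]
  rw [hassoc]
  ext i i'
  rw [Matrix.mul_apply]
  simp only [Matrix.diagonal_mul, Matrix.conjTranspose_apply, hR]
  rcases Nat.lt_or_ge (i : ℕ) k with hi | hi
  · have hembi : emb ⟨(i : ℕ), hi⟩ = i := by ext; simp [emb]
    rw [Finset.sum_eq_single (⟨(i : ℕ), hi⟩ : Fin k)]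
    · rw [if_pos hembi]
      by_cases hii : i = i'
      · subst hii
        rw [if_pos hembi]
        simp [Matrix.diagonal_apply_eq, padVec, hi]
      · rw [if_neg (by rw [hembi]; exact hii)]
        simp [Matrix.diagonal_apply_ne _ hii]
    · intro q _ hq
      have : emb q ≠ i := by
        intro hc; apply hq; apply hemb; rw [hc, hembi]
      rw [if_neg this]
      simp
    · intro h; exact absurd (Finset.mem_univ _) h
  · have hne : ∀ p : Fin k, emb p ≠ i := by
      intro p hc
      have : ((emb p : Fin d) : ℕ) = (i : ℕ) := congrArg _ hc
      simp [emb] at this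
      omega
    rw [Finset.sum_eq_zero (fun p _ => by rw [if_neg (hne p)]; simp)]
    by_cases hii : i = i'
    · subst hii
      have : ¬ ((i : Fin d) : ℕ) < k := by omega
      simp [Matrix.diagonal_apply_eq, padVec, this]
    · simp [Matrix.diagonal_apply_ne _ hii]

end Helpers3
section Helpers4
variable {𝕜 : Type*} [RCLike 𝕜]

lemma cmld_nonneg (m l d : ℕ) : 0 ≤ cmld m l d := Real.sqrt_nonneg _

lemma cmld_lt (m l d : ℕ) (hm : 2 ≤ m) (hl : 0 < l) (hld : l < d) (hdm : d < m * l) :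
    cmld m l d < (d : ℝ) / ((m : ℝ) * l) := by
  have hm' : (2:ℝ) ≤ m := by exact_mod_cast hm
  have hl' : (1:ℝ) ≤ l := by exact_mod_cast hl
  have hld' : (l:ℝ) < d := by exact_mod_cast hld
  have hdm' : (d:ℝ) < m * l := by exact_mod_cast hdm
  have hd0 : (0:ℝ) < d := by linarith
  have hml : (0:ℝ) < (m:ℝ) * l := by nlinarith
  have hα : (0:ℝ) < (d:ℝ)/((m:ℝ)*l) := div_pos hd0 hml
  rw [cmld, show (1 : ℝ) - (d:ℝ)/((m:ℝ)*l) = ((m:ℝ)*l - d)/((m:ℝ)*l) by field_simp]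
  apply (Real.sqrt_lt' hα).mpr
  rw [div_pow, div_mul_div_comm, div_lt_div_iff₀
    (mul_pos (mul_pos (mul_pos (by linarith : (0:ℝ) < (m:ℝ)-1) (by linarith : (0:ℝ) < (m:ℝ)))
      (by linarith : (0:ℝ) < (l:ℝ))) hml) (by positivity)]
  nlinarith [mul_pos (mul_pos (mul_pos (mul_pos hml hml) hd0) (by linarith : (0:ℝ) < m))
    (sub_pos.mpr hld')]

lemma diag_const_smul (l : ℕ) (z : 𝕜) :
    Matrix.diagonal (fun _ : Fin l => z) = z • (1 : Matrix (Fin l) (Fin l) 𝕜) := by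
  ext i j
  rcases eq_or_ne i j with rfl | h
  · simp
  · simp [Matrix.diagonal_apply_ne _ h, Matrix.one_apply_ne h]

set_option maxHeartbeats 2000000 in
lemma pair_norm {l d : ℕ} (Φ : CUIN 𝕜) (X Y : Matrix (Fin l) (Fin d) 𝕜)
    (Q : Matrix (Fin l) (Fin l) 𝕜) (hQu : Q ∈ Matrix.unitaryGroup (Fin l) 𝕜)
    (α c : ℝ) (hc0 : 0 ≤ c) (hcα : c < α)
    (hX : X * Xᴴ = ((α : ℝ) : 𝕜) • 1) (hY : Y * Yᴴ = ((α : ℝ) : 𝕜) • 1)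
    (hXY : X * Yᴴ = ((c : ℝ) : 𝕜) • Q) :
    Φ.N d (Xᴴ * X + Yᴴ * Y)
      = Φ.psi (Fin.append (fun _ : Fin l => α + c) (fun _ : Fin l => α - c)) := by
  classical
  have hac : (0:ℝ) < α + c := by linarith
  have hbc : (0:ℝ) < α - c := by linarith
  have hQ1 : Q * Qᴴ = 1 := by
    simpa [Matrix.star_eq_conjTranspose] using Matrix.mem_unitaryGroup_iff.mp hQu
  have hQ2 : Qᴴ * Q = 1 := by
    simpa [Matrix.star_eq_conjTranspose] using Matrix.mem_unitaryGroup_iff'.mp hQu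
  have hYX : Y * Xᴴ = ((c : ℝ) : 𝕜) • Qᴴ := by
    rw [show Y * Xᴴ = (X * Yᴴ)ᴴ by rw [Matrix.conjTranspose_mul,
      Matrix.conjTranspose_conjTranspose], hXY, Matrix.conjTranspose_smul,
      RCLike.star_def, RCLike.conj_ofReal]
  set P₁ : Matrix (Fin d) (Fin l) 𝕜 := Xᴴ + Yᴴ * Qᴴ with hP₁
  set P₂ : Matrix (Fin d) (Fin l) 𝕜 := Xᴴ - Yᴴ * Qᴴ with hP₂
  have hP₁c : P₁ᴴ = X + Q * Y := by
    simp [hP₁, Matrix.conjTranspose_add, Matrix.conjTranspose_mul]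
  have hP₂c : P₂ᴴ = X - Q * Y := by
    simp [hP₂, Matrix.conjTranspose_sub, Matrix.conjTranspose_mul]
  -- elementary products
  have e2 : X * (Yᴴ * Qᴴ) = ((c : ℝ) : 𝕜) • 1 := by
    rw [← Matrix.mul_assoc, hXY, Matrix.smul_mul, hQ1]
  have e3 : (Q * Y) * Xᴴ = ((c : ℝ) : 𝕜) • 1 := by
    rw [Matrix.mul_assoc, hYX, Matrix.mul_smul, hQ1]
  have e4 : (Q * Y) * (Yᴴ * Qᴴ) = ((α : ℝ) : 𝕜) • 1 := by
    rw [Matrix.mul_assoc, ← Matrix.mul_assoc Y Yᴴ Qᴴ, hY, Matrix.smul_mul, one_mul,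
      Matrix.mul_smul, hQ1]
  have e5 : (Yᴴ * Qᴴ) * (Q * Y) = Yᴴ * Y := by
    rw [Matrix.mul_assoc, ← Matrix.mul_assoc Qᴴ Q Y, hQ2, Matrix.one_mul]
  have h11 : P₁ᴴ * P₁ = ((2*(α+c) : ℝ) : 𝕜) • 1 := by
    rw [hP₁c, hP₁, Matrix.add_mul, Matrix.mul_add, Matrix.mul_add, hX, e2, e3, e4]
    match_scalars <;> push_cast <;> ring
  have h22 : P₂ᴴ * P₂ = ((2*(α-c) : ℝ) : 𝕜) • 1 := by
    rw [hP₂c, hP₂, Matrix.sub_mul, Matrix.mul_sub, Matrix.mul_sub, hX, e2, e3, e4]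
    match_scalars <;> push_cast <;> ring
  have h12 : P₁ᴴ * P₂ = 0 := by
    rw [hP₁c, hP₂, Matrix.add_mul, Matrix.mul_sub, Matrix.mul_sub, hX, e2, e3, e4]
    match_scalars <;> push_cast <;> ring
  have h21 : P₂ᴴ * P₁ = 0 := by
    rw [hP₂c, hP₁, Matrix.sub_mul, Matrix.mul_add, Matrix.mul_add, hX, e2, e3, e4]
    match_scalars <;> push_cast <;> ring
  have hsum : P₁ * P₁ᴴ + P₂ * P₂ᴴ = (Xᴴ * X + Yᴴ * Y) + (Xᴴ * X + Yᴴ * Y) := by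
    rw [hP₁c, hP₂c, hP₁, hP₂, Matrix.add_mul, Matrix.mul_add, Matrix.mul_add,
      Matrix.sub_mul, Matrix.mul_sub, Matrix.mul_sub, e5]
    abel
  -- the isometry
  set s₁ : ℝ := (Real.sqrt (2*(α+c)))⁻¹ with hs₁def
  set s₂ : ℝ := (Real.sqrt (2*(α-c)))⁻¹ with hs₂def
  have hs₁ : s₁^2 * (2*(α+c)) = 1 := by
    rw [hs₁def, inv_pow, Real.sq_sqrt (by linarith)]
    exact inv_mul_cancel₀ (by linarith)
  have hs₂ : s₂^2 * (2*(α-c)) = 1 := by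
    rw [hs₂def, inv_pow, Real.sq_sqrt (by linarith)]
    exact inv_mul_cancel₀ (by linarith)
  set M₀ : Matrix (Fin d) (Fin l ⊕ Fin l) 𝕜 :=
    Matrix.fromCols (((s₁ : ℝ) : 𝕜) • P₁) (((s₂ : ℝ) : 𝕜) • P₂) with hM₀def
  have hM₀ : M₀ᴴ * M₀ = 1 := by
    rw [hM₀def, Matrix.conjTranspose_fromCols_eq_fromRows_conjTranspose,
      Matrix.fromRows_mul_fromCols]
    simp only [Matrix.conjTranspose_smul, RCLike.star_def, RCLike.conj_ofReal,
      Matrix.smul_mul, Matrix.mul_smul, h11, h22, h12, h21, smul_zero, smul_smul]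
    rw [show (((s₁:ℝ):𝕜)) * (((s₁:ℝ):𝕜) * ((2*(α+c):ℝ):𝕜)) = ((s₁^2*(2*(α+c)) : ℝ) : 𝕜) by
        push_cast; ring,
      show (((s₂:ℝ):𝕜)) * (((s₂:ℝ):𝕜) * ((2*(α-c):ℝ):𝕜)) = ((s₂^2*(2*(α-c)) : ℝ) : 𝕜) by
        push_cast; ring,
      hs₁, hs₂]
    simp [Matrix.fromBlocks_one]
  set e : (Fin l ⊕ Fin l) ≃ Fin (l + l) := finSumFinEquiv with hedef
  set M : Matrix (Fin d) (Fin (l + l)) 𝕜 := M₀.submatrix (Equiv.refl (Fin d)) e.symm with hMdef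
  have hM : Mᴴ * M = 1 := by
    rw [hMdef, Matrix.conjTranspose_submatrix,
      Matrix.submatrix_mul_equiv M₀ᴴ M₀ _ (Equiv.refl (Fin d)) _, hM₀,
      Matrix.submatrix_one_equiv]
  -- the diagonal
  set x : Fin (l + l) → ℝ := Fin.append (fun _ : Fin l => α + c) (fun _ : Fin l => α - c)
    with hxdef
  have hxe : (fun p : Fin (l+l) => ((x p : ℝ) : 𝕜))
      = Sum.elim (fun _ : Fin l => ((α+c : ℝ) : 𝕜)) (fun _ : Fin l => ((α-c : ℝ) : 𝕜)) ∘ e.symm := by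
    funext p
    induction p using Fin.addCases with
    | left a =>
      rw [hedef]
      simp only [finSumFinEquiv_symm_apply_castAdd, Sum.elim_inl, Function.comp_apply]
      rw [hxdef, Fin.append_left]
    | right b =>
      rw [hedef]
      simp only [finSumFinEquiv_symm_apply_natAdd, Sum.elim_inr, Function.comp_apply]
      rw [hxdef, Fin.append_right]
  have hMDM : M * Matrix.diagonal (fun p => ((x p : ℝ) : 𝕜)) * Mᴴ = Xᴴ * X + Yᴴ * Y := by
    have hdiag : Matrix.diagonal ((Sum.elim (fun _ : Fin l => ((α+c : ℝ) : 𝕜))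
        (fun _ : Fin l => ((α-c : ℝ) : 𝕜))) ∘ ⇑e.symm)
        = (Matrix.diagonal (Sum.elim (fun _ : Fin l => ((α+c : ℝ) : 𝕜))
        (fun _ : Fin l => ((α-c : ℝ) : 𝕜)))).submatrix ⇑e.symm ⇑e.symm :=
      (Matrix.submatrix_diagonal_equiv _ e.symm).symm
    rw [hxe, hdiag, hMdef, Matrix.conjTranspose_submatrix,
      Matrix.submatrix_mul_equiv M₀ _ _ e.symm _,
      Matrix.submatrix_mul_equiv _ M₀ᴴ _ e.symm _,
      Equiv.coe_refl, Matrix.submatrix_id_id]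
    rw [← Matrix.fromBlocks_diagonal, diag_const_smul, diag_const_smul, hM₀def,
      Matrix.conjTranspose_fromCols_eq_fromRows_conjTranspose,
      Matrix.fromCols_mul_fromBlocks, Matrix.fromCols_mul_fromRows]
    simp only [Matrix.conjTranspose_smul, RCLike.star_def, RCLike.conj_ofReal,
      Matrix.smul_mul, Matrix.mul_smul, Matrix.mul_zero, Matrix.zero_mul, smul_zero,
      add_zero, zero_add, Matrix.mul_one, smul_smul]
    rw [show (((s₁:ℝ):𝕜)) * (((α+c:ℝ):𝕜) * ((s₁:ℝ):𝕜)) = ((s₁^2*(α+c) : ℝ) : 𝕜) by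
        push_cast; ring,
      show (((s₂:ℝ):𝕜)) * (((α-c:ℝ):𝕜) * ((s₂:ℝ):𝕜)) = ((s₂^2*(α-c) : ℝ) : 𝕜) by
        push_cast; ring,
      show s₁^2*(α+c) = 1/2 by nlinarith, show s₂^2*(α-c) = 1/2 by nlinarith,
      ← smul_add, hsum]
    match_scalars <;> push_cast <;> ring
  -- the dimension bound
  have h2l : l + l ≤ d := by
    have h1 : (Mᴴ * M).rank = M.rank := Matrix.rank_conjTranspose_mul_self M
    rw [hM, Matrix.rank_one] at h1
    have h2 := M.rank_le_card_height
    simp only [Fintype.card_fin] at h1 h2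
    omega
  obtain ⟨t, rfl⟩ : ∃ t, d = (l + l) + t := ⟨d - (l + l), by omega⟩
  obtain ⟨U, hUu, hconj⟩ := key_conj h2l M hM x
  rw [← hMDM, ← Φ.norm_conj _ U hUu, hconj, Φ.pad_norm x]
  rfl

end Helpers4
section Helpers5
variable {𝕜 : Type*} [RCLike 𝕜]

lemma traceAbs_scalar {l d : ℕ} (B : Matrix (Fin l) (Fin d) 𝕜) (c : ℝ) (hc0 : 0 ≤ c)
    (hBB : Bᴴ * B = ((c^2 : ℝ) : 𝕜) • 1) : traceAbs B = (d : ℝ) * c := by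
  have heig : ∀ j, (Matrix.posSemidef_conjTranspose_mul_self B).1.eigenvalues j = c^2 :=
    fun j => eig_scalar (c^2) (Bᴴ * B) _ hBB j
  rw [traceAbs]
  simp only [heig, Real.sqrt_sq hc0]
  simp [Finset.sum_const, Finset.card_univ, nsmul_eq_mul]

end Helpers5


theorem stmt9 {𝕜 : Type*} [RCLike 𝕜] (m l d : ℕ) (hm : 2 ≤ m) (hl : 0 < l) (hld : l < d)
    (hdm : d < m * l)
    (Φ : CUIN 𝕜) (V : Fin m → Matrix (Fin l) (Fin d) 𝕜)
    (huwp : IsUWP V)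
    (hQ : ∀ i j : Fin m, i ≠ j → ∃ Q ∈ Matrix.unitaryGroup (Fin l) 𝕜,
      V i * (V j)ᴴ = (cmld m l d : 𝕜) • Q) :
    (∃ i j : Fin m, i ≠ j ∧ (l : ℝ) * cmld m l d ≤ traceAbs (V i * (V j)ᴴ)) ∧
    errP Φ 2 V = Φ.psi (Fin.append (fun _ : Fin l => (d : ℝ) / ((m : ℝ) * l) + cmld m l d)
        (fun _ : Fin l => (d : ℝ) / ((m : ℝ) * l) - cmld m l d)) := by
  classical
  have hc0 : 0 ≤ cmld m l d := cmld_nonneg m l d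
  have hcα : cmld m l d < (d : ℝ) / ((m : ℝ) * l) := cmld_lt m l d hm hl hld hdm
  have hαk : (((d : ℝ) / ((m : ℝ) * l) : ℝ) : 𝕜) = (d : 𝕜) / ((m : 𝕜) * (l : 𝕜)) := by
    push_cast; ring
  have hXX : ∀ i, V i * (V i)ᴴ = (((d : ℝ) / ((m : ℝ) * l) : ℝ) : 𝕜) • 1 := by
    intro i; rw [hαk]; exact huwp.2 i
  set i0 : Fin m := ⟨0, by omega⟩ with hi0
  set j0 : Fin m := ⟨1, by omega⟩ with hj0
  have hne : i0 ≠ j0 := by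
    simp [hi0, hj0, Fin.ext_iff]
  have hval : ∀ i j : Fin m, i ≠ j →
      Φ.N d ((V i)ᴴ * V i + (V j)ᴴ * V j)
        = Φ.psi (Fin.append (fun _ : Fin l => (d : ℝ) / ((m : ℝ) * l) + cmld m l d)
            (fun _ : Fin l => (d : ℝ) / ((m : ℝ) * l) - cmld m l d)) := by
    intro i j hij
    obtain ⟨Q, hQu, hXY⟩ := hQ i j hij
    exact pair_norm Φ (V i) (V j) Q hQu _ _ hc0 hcα (hXX i) (hXX j) hXY
  constructor
  · refine ⟨i0, j0, hne, ?_⟩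
    obtain ⟨Q, hQu, hXY⟩ := hQ i0 j0 hne
    have hQ2 : Qᴴ * Q = 1 := by
      simpa [Matrix.star_eq_conjTranspose] using Matrix.mem_unitaryGroup_iff'.mp hQu
    have hBB : (V i0 * (V j0)ᴴ)ᴴ * (V i0 * (V j0)ᴴ) = (((cmld m l d)^2 : ℝ) : 𝕜) • 1 := by
      rw [hXY, Matrix.conjTranspose_smul, RCLike.star_def, RCLike.conj_ofReal,
        Matrix.smul_mul, Matrix.mul_smul, hQ2, smul_smul]
      congr 1
      push_cast; ring
    rw [traceAbs_scalar _ _ hc0 hBB]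
  · have hset : {r : ℝ | ∃ K : Finset (Fin m), K.card = 2
        ∧ r = Φ.N d (∑ i ∈ K, (V i)ᴴ * V i)}
        = {Φ.psi (Fin.append (fun _ : Fin l => (d : ℝ) / ((m : ℝ) * l) + cmld m l d)
            (fun _ : Fin l => (d : ℝ) / ((m : ℝ) * l) - cmld m l d))} := by
      ext r
      simp only [Set.mem_setOf_eq, Set.mem_singleton_iff]
      constructor
      · rintro ⟨K, hK, rfl⟩
        obtain ⟨i, j, hij, rfl⟩ := Finset.card_eq_two.mp hK
        rw [Finset.sum_pair hij]
        exact hval i j hij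
      · rintro rfl
        exact ⟨{i0, j0}, Finset.card_pair hne,
          by rw [Finset.sum_pair hne, hval i0 j0 hne]⟩
    rw [errP, hset, csSup_singleton]
end

section
/- Let {V_i}_{i=1}^m be a uniformly weighted projective rank-l (m,l,d)-protocol. Then for every fixed 1 ≤ i ≤ m: Σ_{j≠i} tr(|V_i V_j*|) ≥ l·√( (d/(ml))·(1 − d/(ml)) ). -/
open Matrix BigOperators
open scoped ComplexOrder

section Helpers

open Matrix BigOperators
open scoped ComplexOrder

variable {𝕜 : Type*} [RCLike 𝕜]

lemma trace_eq_sum_eigs {n : ℕ} (A : Matrix (Fin n) (Fin n) 𝕜) (hA : A.IsHermitian) :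
    A.trace = ∑ k, (hA.eigenvalues k : 𝕜) := by
  conv_lhs => rw [hA.spectral_theorem]
  rw [Unitary.conjStarAlgAut_apply, Matrix.trace_mul_comm, ← Matrix.mul_assoc]
  rw [show (star (hA.eigenvectorUnitary : Matrix (Fin n) (Fin n) 𝕜)) *
      (hA.eigenvectorUnitary : Matrix (Fin n) (Fin n) 𝕜) = 1 from by
    simpa using unitary.coe_star_mul_self hA.eigenvectorUnitary]
  rw [Matrix.one_mul, Matrix.trace_diagonal]
  rfl

lemma eig_le_of_psd {n : ℕ} (A : Matrix (Fin n) (Fin n) 𝕜) (K2 : ℝ) (hK2 : 0 ≤ K2)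
    (hpsd : (((K2 : ℝ) : 𝕜) • (1 : Matrix (Fin n) (Fin n) 𝕜) - A * Aᴴ).PosSemidef) (k : Fin n) :
    (Matrix.posSemidef_conjTranspose_mul_self A).1.eigenvalues k ≤ K2 := by
  set hB := Matrix.posSemidef_conjTranspose_mul_self A with hBdef
  set lam : ℝ := hB.1.eigenvalues k with hlamdef
  have hlam0 : 0 ≤ lam := hB.eigenvalues_nonneg k
  set v : Fin n → 𝕜 := ⇑(hB.1.eigenvectorBasis k) with hvdef
  have hBv : (Aᴴ * A) *ᵥ v = (lam : 𝕜) • v := by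
    have h := hB.1.mulVec_eigenvectorBasis k
    rw [RCLike.real_smul_eq_coe_smul (K := 𝕜)] at h
    exact h
  have hvv : dotProduct (star v) v = 1 := by
    have h1 := hB.1.eigenvectorBasis.orthonormal.1 k
    have h2 := EuclideanSpace.inner_eq_star_dotProduct (𝕜 := 𝕜)
      (hB.1.eigenvectorBasis k) (hB.1.eigenvectorBasis k)
    rw [inner_self_eq_norm_sq_to_K, h1] at h2
    rw [dotProduct_comm]
    simpa using h2.symm
  set w : Fin n → 𝕜 := A *ᵥ v with hwdef
  have hww : dotProduct (star w) w = (lam : 𝕜) := by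
    rw [hwdef, Matrix.star_mulVec, ← Matrix.dotProduct_mulVec,
      Matrix.mulVec_mulVec, hBv, dotProduct_smul, hvv, smul_eq_mul, mul_one]
  have hAAw : (A * Aᴴ) *ᵥ w = (lam : 𝕜) • w := by
    rw [hwdef, Matrix.mulVec_mulVec, Matrix.mul_assoc, ← Matrix.mulVec_mulVec, hBv,
      Matrix.mulVec_smul]
  have hpos := hpsd.dotProduct_mulVec_nonneg w
  rw [Matrix.sub_mulVec, dotProduct_sub, Matrix.smul_mulVec,
    Matrix.one_mulVec, dotProduct_smul, hww, hAAw, dotProduct_smul, hww,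
    smul_eq_mul, smul_eq_mul] at hpos
  have hreal : ((K2 * lam - lam * lam : ℝ) : 𝕜) = (K2 : 𝕜) * (lam : 𝕜) - (lam : 𝕜) * (lam : 𝕜) := by
    push_cast; ring
  rw [← hreal, ← RCLike.ofReal_zero, RCLike.ofReal_le_ofReal] at hpos
  nlinarith [hpos, hlam0, hK2]

end Helpers

theorem stmt11 {𝕜 : Type*} [RCLike 𝕜] (m l d : ℕ) (hl : 0 < l) (hld : l < d) (hdm : d < m * l)
    (V : Fin m → Matrix (Fin l) (Fin d) 𝕜) (huwp : IsUWP V) :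
    ∀ i : Fin m,
      (l : ℝ) * Real.sqrt ((d : ℝ) / ((m : ℝ) * l) * (1 - (d : ℝ) / ((m : ℝ) * l))) ≤
        ∑ j ∈ Finset.univ.erase i, traceAbs (V i * (V j)ᴴ) := by
  intro i
  have hml : 0 < m * l := lt_of_le_of_lt (Nat.zero_le d) hdm
  have hm : 0 < m := by
    rcases Nat.eq_zero_or_pos m with h | h
    · simp [h] at hml
    · exact h
  set cR : ℝ := (d : ℝ) / ((m : ℝ) * (l : ℝ)) with hcRdef
  have hmlR : (0 : ℝ) < (m : ℝ) * (l : ℝ) := by positivity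
  have hc0 : 0 < cR := div_pos (by exact_mod_cast Nat.lt_of_lt_of_le hl hld.le) hmlR
  have hc1 : cR < 1 := by
    rw [hcRdef, div_lt_one hmlR]
    exact_mod_cast hdm
  have hKsq0 : 0 < cR * (1 - cR) := by nlinarith
  set K : ℝ := Real.sqrt (cR * (1 - cR)) with hKdef
  have hKpos : 0 < K := Real.sqrt_pos.2 hKsq0
  have hK2 : K ^ 2 = cR * (1 - cR) := Real.sq_sqrt hKsq0.le
  set c : 𝕜 := ((cR : ℝ) : 𝕜) with hcdef
  have hcast : ((d : 𝕜) / ((m : 𝕜) * (l : 𝕜))) = c := by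
    rw [hcdef, hcRdef]; push_cast; ring
  have hci : ∀ j, V j * (V j)ᴴ = c • 1 := fun j => by rw [huwp.2 j, hcast]
  set A : Fin m → Matrix (Fin l) (Fin l) 𝕜 := fun j => V i * (V j)ᴴ with hAdef
  have hAA : ∀ j, A j * (A j)ᴴ = V i * ((V j)ᴴ * V j) * (V i)ᴴ := by
    intro j
    rw [hAdef]
    simp only [Matrix.conjTranspose_mul, Matrix.conjTranspose_conjTranspose]
    rw [Matrix.mul_assoc, Matrix.mul_assoc, Matrix.mul_assoc]
  have hsum_all : ∑ j, A j * (A j)ᴴ = c • 1 := by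
    simp only [hAA]
    rw [← Matrix.sum_mul, ← Matrix.mul_sum, huwp.1, Matrix.mul_one]
    exact hci i
  have hii : A i * (A i)ᴴ = (c * c) • 1 := by
    rw [hAdef]
    simp only [hci i, Matrix.conjTranspose_smul, Matrix.conjTranspose_one]
    rw [Matrix.smul_mul, Matrix.mul_smul, Matrix.one_mul, smul_smul]
    congr 1
    rw [hcdef, RCLike.star_def, RCLike.conj_ofReal]
  have hS : ∑ j ∈ Finset.univ.erase i, A j * (A j)ᴴ = ((cR * (1 - cR) : ℝ) : 𝕜) • 1 := by
    have h : A i * (A i)ᴴ + ∑ j ∈ Finset.univ.erase i, A j * (A j)ᴴ = ∑ j, A j * (A j)ᴴ := by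
      simpa using Finset.add_sum_erase Finset.univ (fun j => A j * (A j)ᴴ) (Finset.mem_univ i)
    have h2 : ∑ j ∈ Finset.univ.erase i, A j * (A j)ᴴ = c • 1 - (c * c) • 1 := by
      rw [eq_sub_iff_add_eq, ← hii, ← hsum_all, add_comm]
      exact h
    rw [h2, ← sub_smul]
    congr 1
    rw [hcdef]
    push_cast
    ring
  have hpsd : ∀ j ∈ Finset.univ.erase i,
      (((cR * (1 - cR) : ℝ) : 𝕜) • (1 : Matrix (Fin l) (Fin l) 𝕜) - A j * (A j)ᴴ).PosSemidef := by
    intro j hj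
    have h : A j * (A j)ᴴ + ∑ j' ∈ (Finset.univ.erase i).erase j, A j' * (A j')ᴴ
        = ∑ j' ∈ Finset.univ.erase i, A j' * (A j')ᴴ := by
      simpa using Finset.add_sum_erase (Finset.univ.erase i) (fun j => A j * (A j)ᴴ) hj
    have h2 : ((cR * (1 - cR) : ℝ) : 𝕜) • (1 : Matrix (Fin l) (Fin l) 𝕜) - A j * (A j)ᴴ
        = ∑ j' ∈ (Finset.univ.erase i).erase j, A j' * (A j')ᴴ := by
      rw [← hS, ← h, add_sub_cancel_left]
    rw [h2]
    exact Finset.sum_induction _ _ (fun a b ha hb => ha.add hb) Matrix.PosSemidef.zero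
      (fun j' _ => Matrix.posSemidef_self_mul_conjTranspose _)
  -- eigenvalue bounds and per-term estimate
  have hkey : ∀ j ∈ Finset.univ.erase i,
      RCLike.re ((A j)ᴴ * A j).trace / K ≤ traceAbs (A j) := by
    intro j hj
    have heig := fun k => eig_le_of_psd (A j) (cR * (1 - cR)) hKsq0.le (hpsd j hj) k
    have heig0 := fun k => (Matrix.posSemidef_conjTranspose_mul_self (A j)).eigenvalues_nonneg k
    have htr : RCLike.re ((A j)ᴴ * A j).trace
        = ∑ k, (Matrix.posSemidef_conjTranspose_mul_self (A j)).1.eigenvalues k := by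
      rw [trace_eq_sum_eigs _ (Matrix.posSemidef_conjTranspose_mul_self (A j)).1]
      rw [← RCLike.ofReal_sum]
      exact RCLike.ofReal_re _
    rw [htr, traceAbs, Finset.sum_div]
    apply Finset.sum_le_sum
    intro k _
    set lam := (Matrix.posSemidef_conjTranspose_mul_self (A j)).1.eigenvalues k
    have h1 : lam / K ≤ Real.sqrt lam := by
      rw [Real.le_sqrt (div_nonneg (heig0 k) hKpos.le) (heig0 k)]
      rw [div_pow, hK2]
      rw [div_le_iff₀ (by nlinarith)]
      nlinarith [heig k, heig0 k, hKsq0]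
    exact h1
  -- sum up
  have htotal : ∑ j ∈ Finset.univ.erase i, RCLike.re ((A j)ᴴ * A j).trace
      = cR * (1 - cR) * l := by
    have h1 : ∀ j, ((A j)ᴴ * A j).trace = (A j * (A j)ᴴ).trace := fun j =>
      Matrix.trace_mul_comm _ _
    calc ∑ j ∈ Finset.univ.erase i, RCLike.re ((A j)ᴴ * A j).trace
        = RCLike.re (∑ j ∈ Finset.univ.erase i, (A j * (A j)ᴴ).trace) := by
          rw [map_sum]; exact Finset.sum_congr rfl fun j _ => by rw [h1]
      _ = RCLike.re ((∑ j ∈ Finset.univ.erase i, A j * (A j)ᴴ).trace) := by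
          rw [Matrix.trace_sum]
      _ = cR * (1 - cR) * l := by
          rw [hS, Matrix.trace_smul, Matrix.trace_one, smul_eq_mul]
          rw [show ((Fintype.card (Fin l) : 𝕜)) = ((l : ℝ) : 𝕜) by push_cast [Fintype.card_fin]; ring]
          rw [← RCLike.ofReal_mul, RCLike.ofReal_re]
  have hfinal : (l : ℝ) * K ≤ ∑ j ∈ Finset.univ.erase i, traceAbs (A j) := by
    calc (l : ℝ) * K = (cR * (1 - cR) * l) / K := by
          field_simp
          nlinarith [hK2]
      _ = (∑ j ∈ Finset.univ.erase i, RCLike.re ((A j)ᴴ * A j).trace) / K := by rw [htotal]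
      _ = ∑ j ∈ Finset.univ.erase i, RCLike.re ((A j)ᴴ * A j).trace / K := Finset.sum_div _ _ _
      _ ≤ ∑ j ∈ Finset.univ.erase i, traceAbs (A j) := Finset.sum_le_sum hkey
  exact hfinal
end

section
/- Let {V_i}_{i=1}^m be a uniformly weighted projective rank-l (m,l,d)-protocol with m ≥ 2. Then for every fixed 1 ≤ i ≤ m: max_{j≠i} tr(|V_i V_j*|²) ≥ l·c_{m,l,d}². -/
open Matrix BigOperators
open scoped ComplexOrder

theorem stmt12 {𝕜 : Type*} [RCLike 𝕜] (m l d : ℕ) (hm : 2 ≤ m) (hl : 0 < l) (hld : l < d)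
    (hdm : d < m * l)
    (V : Fin m → Matrix (Fin l) (Fin d) 𝕜) (huwp : IsUWP V) :
    ∀ i : Fin m, ∃ j : Fin m, j ≠ i ∧
      (l : ℝ) * cmld m l d ^ 2 ≤ traceAbsSq (V i * (V j)ᴴ) := by
  obtain ⟨hsum, hproj⟩ := huwp
  intro i
  have hm0 : (0:ℝ) < (m:ℝ) := by positivity
  have hm1 : (1:ℝ) ≤ (m:ℝ) - 1 := by
    have : (2:ℝ) ≤ (m:ℝ) := by exact_mod_cast hm
    linarith
  have hl0 : (0:ℝ) < (l:ℝ) := by exact_mod_cast hl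
  have hml : (0:ℝ) < (m:ℝ) * (l:ℝ) := by positivity
  set c₀ : ℝ := (d:ℝ) / ((m:ℝ) * (l:ℝ)) with hc₀
  have hc₀1 : c₀ < 1 := by
    rw [hc₀, div_lt_one hml]
    exact_mod_cast hdm
  have hc₀0 : 0 ≤ c₀ := by positivity
  set κ : 𝕜 := (d : 𝕜) / ((m : 𝕜) * (l : 𝕜)) with hκ
  -- the sum over all j of the traces
  have h1 : ∀ j : Fin m, ((V i * (V j)ᴴ)ᴴ * (V i * (V j)ᴴ)).trace
      = (((V i)ᴴ * V i) * ((V j)ᴴ * V j)).trace := by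
    intro j
    rw [conjTranspose_mul, conjTranspose_conjTranspose]
    have h0 : V j * (V i)ᴴ * (V i * (V j)ᴴ) = V j * ((V i)ᴴ * V i * (V j)ᴴ) := by
      simp [Matrix.mul_assoc]
    rw [h0, Matrix.trace_mul_comm]
    simp [Matrix.mul_assoc]
  have hall : ∑ j : Fin m, ((V i * (V j)ᴴ)ᴴ * (V i * (V j)ᴴ)).trace = κ * l := by
    calc ∑ j : Fin m, ((V i * (V j)ᴴ)ᴴ * (V i * (V j)ᴴ)).trace
        = ∑ j : Fin m, (((V i)ᴴ * V i) * ((V j)ᴴ * V j)).trace := by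
          exact Finset.sum_congr rfl fun j _ => h1 j
      _ = (((V i)ᴴ * V i) * ∑ j : Fin m, ((V j)ᴴ * V j)).trace := by
          rw [Finset.mul_sum, Matrix.trace_sum]
      _ = ((V i)ᴴ * V i).trace := by rw [hsum, mul_one]
      _ = (V i * (V i)ᴴ).trace := Matrix.trace_mul_comm _ _
      _ = κ * l := by
          rw [hproj i, Matrix.trace_smul, Matrix.trace_one]
          simp [smul_eq_mul]
  have hii : ((V i * (V i)ᴴ)ᴴ * (V i * (V i)ᴴ)).trace = κ * κ * l := by
    rw [hproj i]
    have hκstar : star κ = κ := by simp [hκ]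
    rw [conjTranspose_smul, conjTranspose_one, smul_mul_assoc, mul_smul_comm, one_mul,
      smul_smul, Matrix.trace_smul, Matrix.trace_one, hκstar]
    simp [smul_eq_mul, mul_assoc]
  -- the sum over j ≠ i
  have hκre : κ = ((c₀ : ℝ) : 𝕜) := by
    rw [hκ, hc₀]
    push_cast
    ring
  have hkey : ∑ j ∈ Finset.univ.erase i, traceAbsSq (V i * (V j)ᴴ)
      = (l:ℝ) * c₀ * (1 - c₀) := by
    have hsplit : ∑ j ∈ Finset.univ.erase i, ((V i * (V j)ᴴ)ᴴ * (V i * (V j)ᴴ)).trace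
        = κ * l - κ * κ * l := by
      have h2 : ∑ j ∈ Finset.univ.erase i, ((V i * (V j)ᴴ)ᴴ * (V i * (V j)ᴴ)).trace
          + ((V i * (V i)ᴴ)ᴴ * (V i * (V i)ᴴ)).trace
          = ∑ j : Fin m, ((V i * (V j)ᴴ)ᴴ * (V i * (V j)ᴴ)).trace :=
        Finset.sum_erase_add Finset.univ _ (Finset.mem_univ i)
      rw [hall, hii] at h2
      linear_combination h2
    have hval : κ * l - κ * κ * l = (((l:ℝ) * c₀ * (1 - c₀) : ℝ) : 𝕜) := by
      rw [hκre]
      push_cast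
      ring
    unfold traceAbsSq
    rw [← map_sum, hsplit, hval, RCLike.ofReal_re]
  -- relate the target constant
  have hm1' : (m:ℝ) - 1 ≠ 0 := by linarith
  have hcm : ((m:ℝ) - 1) * ((l:ℝ) * cmld m l d ^ 2) = (l:ℝ) * c₀ * (1 - c₀) := by
    have harg : (0:ℝ) ≤ (d : ℝ) / (((m : ℝ) - 1) * m * l) * (1 - (d : ℝ) / ((m : ℝ) * l)) := by
      apply mul_nonneg
      · positivity
      · linarith [hc₀1]
    rw [cmld, Real.sq_sqrt harg, hc₀]
    field_simp
  -- pigeonhole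
  by_contra hcon
  push_neg at hcon
  have hmemne : (Finset.univ.erase i).Nonempty := by
    rw [← Finset.card_pos, Finset.card_erase_of_mem (Finset.mem_univ i), Finset.card_univ,
      Fintype.card_fin]
    omega
  have hlt : ∑ j ∈ Finset.univ.erase i, traceAbsSq (V i * (V j)ᴴ)
      < ∑ j ∈ Finset.univ.erase i, (l:ℝ) * cmld m l d ^ 2 := by
    apply Finset.sum_lt_sum_of_nonempty hmemne
    intro j hj
    exact hcon j (Finset.ne_of_mem_erase hj)
  rw [Finset.sum_const, Finset.card_erase_of_mem (Finset.mem_univ i), Finset.card_univ,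
    Fintype.card_fin, nsmul_eq_mul, hkey] at hlt
  have hcast : ((m - 1 : ℕ) : ℝ) = (m:ℝ) - 1 := by
    have : 1 ≤ m := by omega
    push_cast [this]
    ring
  rw [hcast, hcm] at hlt
  exact lt_irrefl _ hlt
end

section
/- Let ‖·‖ be a compatible unitarily invariant norm with associated symmetric gauge function ψ, and let {V_i}_{i=1}^m be a uniformly weighted projective rank-l (m,l,d)-protocol with m ≥ 2. Then max_{i≠j} ‖ |V_i V_j*|² ‖ ≥ (d·η_ψ(l)/(m(m−1)))·(1 − d/(ml)). Moreover, if ‖·‖ is strict, then equality holds if and only if V_i V_j* = c_{m,l,d}·Q_{ij} for some unitary operators Q_{ij} on 𝔽^l, for all 1 ≤ i ≠ j ≤ m. -/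
open Matrix BigOperators
open scoped ComplexOrder

noncomputable section AuxLemmas
variable {𝕜 : Type*} [RCLike 𝕜]

namespace CUIN

lemma N_zero_s14 (Φ : CUIN 𝕜) (n : ℕ) : Φ.N n 0 = 0 := by
  have := Φ.smul_eq n (0 : 𝕜) 0
  simpa using this

lemma N_sum_le_s14 (Φ : CUIN 𝕜) (n : ℕ) {ι : Type*} (s : Finset ι)
    (f : ι → Matrix (Fin n) (Fin n) 𝕜) :
    Φ.N n (∑ i ∈ s, f i) ≤ ∑ i ∈ s, Φ.N n (f i) := by
  classical
  induction s using Finset.induction with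
  | empty => simp [Φ.N_zero_s14]
  | insert _ _ hx ih =>
    rename_i a s _
    rw [Finset.sum_insert hx, Finset.sum_insert hx]
    exact le_trans (Φ.triangle n _ _) (by linarith)

lemma perm_mem_unitary {n : ℕ} (e : Equiv.Perm (Fin n)) :
    (e.toPEquiv.toMatrix : Matrix (Fin n) (Fin n) 𝕜) ∈ Matrix.unitaryGroup (Fin n) 𝕜 := by
  rw [Matrix.mem_unitaryGroup_iff']
  have h1 : star (e.toPEquiv.toMatrix : Matrix (Fin n) (Fin n) 𝕜)
      = (e.symm.toPEquiv.toMatrix : Matrix (Fin n) (Fin n) 𝕜) := by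
    ext i j
    simp [Matrix.star_apply, PEquiv.toMatrix, Equiv.toPEquiv, Equiv.eq_symm_apply, eq_comm,
      apply_ite (star : 𝕜 → 𝕜)]
  rw [h1, PEquiv.toMatrix_toPEquiv_mul]
  ext i j
  simp [PEquiv.toMatrix, Equiv.toPEquiv, Matrix.one_apply, Equiv.symm_apply_eq]

lemma N_diag_perm_s14 (Φ : CUIN 𝕜) {n : ℕ} (x : Fin n → 𝕜) (e : Equiv.Perm (Fin n)) :
    Φ.N n (Matrix.diagonal (x ∘ e)) = Φ.N n (Matrix.diagonal x) := by
  have hkey : Matrix.diagonal (x ∘ e) =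
      (e.toPEquiv.toMatrix : Matrix (Fin n) (Fin n) 𝕜) * Matrix.diagonal x *
        (e.symm.toPEquiv.toMatrix : Matrix (Fin n) (Fin n) 𝕜) := by
    rw [PEquiv.toMatrix_toPEquiv_mul, PEquiv.mul_toMatrix_toPEquiv, Equiv.symm_symm,
      Matrix.submatrix_submatrix, Function.comp_id, Function.id_comp,
      Matrix.submatrix_diagonal _ _ e.injective]
  rw [hkey]
  exact Φ.invariant n _ ⟨_, perm_mem_unitary e⟩ ⟨_, perm_mem_unitary e.symm⟩

lemma eta_pos (Φ : CUIN 𝕜) {l : ℕ} (hl : 0 < l) : 0 < Φ.eta l := by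
  have h1 : Φ.N l 1 ≠ 0 := by
    intro h
    have := Φ.eq_zero l 1 h
    have := congrFun (congrFun this ⟨0, hl⟩) ⟨0, hl⟩
    simp [Matrix.one_apply] at this
  have := Φ.nonneg l 1
  have : 0 < Φ.N l 1 := lt_of_le_of_ne this (Ne.symm h1)
  exact div_pos this (by exact_mod_cast hl)

lemma N_real_smul (Φ : CUIN 𝕜) (n : ℕ) {r : ℝ} (hr : 0 ≤ r) (A : Matrix (Fin n) (Fin n) 𝕜) :
    Φ.N n (((r : ℝ) : 𝕜) • A) = r * Φ.N n A := by
  rw [Φ.smul_eq, RCLike.norm_ofReal, abs_of_nonneg hr]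

/-- Key lemma: `re(tr A) · η ≤ ‖A‖` for `A` positive semidefinite. -/
lemma re_trace_mul_eta_le (Φ : CUIN 𝕜) {l : ℕ} (hl : 0 < l)
    (A : Matrix (Fin l) (Fin l) 𝕜) (hA : A.PosSemidef) :
    RCLike.re A.trace * Φ.eta l ≤ Φ.N l A := by
  haveI : NeZero l := ⟨hl.ne'⟩
  have hH := hA.1
  set ev := hH.eigenvalues with hev
  set t : ℝ := ∑ j, ev j with ht
  -- trace identity
  have htr : A.trace = ((t : ℝ) : 𝕜) := by
    conv_lhs => rw [hH.spectral_theorem, Unitary.conjStarAlgAut_apply]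
    rw [Matrix.trace_mul_cycle]
    rw [(Matrix.mem_unitaryGroup_iff').mp (hH.eigenvectorUnitary).2, one_mul,
      Matrix.trace_diagonal]
    push_cast [ht]
    rfl
  have htnn : 0 ≤ t := Finset.sum_nonneg fun j _ => hA.eigenvalues_nonneg j
  -- norm of A equals norm of diagonal
  have hND : Φ.N l A = Φ.N l (Matrix.diagonal (RCLike.ofReal ∘ ev)) := by
    conv_lhs => rw [hH.spectral_theorem, Unitary.conjStarAlgAut_apply]
    exact Φ.invariant l _ (hH.eigenvectorUnitary) (star (hH.eigenvectorUnitary))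
  -- averaging over cyclic shifts
  have hsum : ∑ k : Fin l, Matrix.diagonal ((RCLike.ofReal ∘ ev) ∘ (Equiv.addRight k)) =
      ((t : ℝ) : 𝕜) • (1 : Matrix (Fin l) (Fin l) 𝕜) := by
    ext i j
    simp only [Matrix.sum_apply, Matrix.diagonal_apply, Matrix.smul_apply, Matrix.one_apply,
      Function.comp_apply, Equiv.coe_addRight]
    by_cases h : i = j
    · subst h
      simp only [eq_self_iff_true, if_true, smul_eq_mul, mul_one]
      rw [ht, RCLike.ofReal_sum]
      exact Fintype.sum_equiv (Equiv.addLeft i)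
        (fun k => (RCLike.ofReal (ev (i + k)) : 𝕜))
        (fun j => (RCLike.ofReal (ev j) : 𝕜)) (fun k => by simp [Equiv.coe_addLeft])
    · simp [h]
  have hle : t * Φ.N l 1 ≤ (l : ℝ) * Φ.N l A := by
    have h1 : Φ.N l (((t : ℝ) : 𝕜) • (1 : Matrix (Fin l) (Fin l) 𝕜)) = t * Φ.N l 1 :=
      Φ.N_real_smul l htnn 1
    have h2 := Φ.N_sum_le_s14 l Finset.univ
      (fun k : Fin l => Matrix.diagonal ((RCLike.ofReal ∘ ev) ∘ (Equiv.addRight k)))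
    rw [hsum] at h2
    have h3 : ∀ k : Fin l, Φ.N l (Matrix.diagonal ((RCLike.ofReal ∘ ev) ∘ (Equiv.addRight k)))
        = Φ.N l A := fun k => by rw [Φ.N_diag_perm_s14, ← hND]
    calc t * Φ.N l 1 = Φ.N l (((t : ℝ) : 𝕜) • (1 : Matrix (Fin l) (Fin l) 𝕜)) := h1.symm
      _ ≤ ∑ k : Fin l, Φ.N l (Matrix.diagonal ((RCLike.ofReal ∘ ev) ∘ (Equiv.addRight k))) := h2
      _ = (l : ℝ) * Φ.N l A := by
          rw [Finset.sum_congr rfl (fun k _ => h3 k)]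
          simp [mul_comm]
  have hre : RCLike.re A.trace = t := by rw [htr]; simp
  rw [hre, CUIN.eta]
  rw [div_eq_mul_inv, ← mul_assoc]
  have hlpos : (0:ℝ) < (l:ℝ) := by exact_mod_cast hl
  rw [mul_comm t (Φ.N l 1)] at hle ⊢
  calc Φ.N l 1 * t * (l:ℝ)⁻¹ ≤ ((l:ℝ) * Φ.N l A) * (l:ℝ)⁻¹ := by
        apply mul_le_mul_of_nonneg_right hle (by positivity)
    _ = Φ.N l A := by field_simp
end CUIN
end AuxLemmas
theorem stmt14 {𝕜 : Type*} [RCLike 𝕜] (m l d : ℕ) (hm : 2 ≤ m) (hl : 0 < l) (hld : l < d)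
    (hdm : d < m * l)
    (Φ : CUIN 𝕜) (V : Fin m → Matrix (Fin l) (Fin d) 𝕜) (huwp : IsUWP V) :
    (d : ℝ) * Φ.eta l / ((m : ℝ) * ((m : ℝ) - 1)) * (1 - (d : ℝ) / ((m : ℝ) * l)) ≤
      sSup {r : ℝ | ∃ i j : Fin m, i ≠ j ∧
        r = Φ.N l ((V i * (V j)ᴴ)ᴴ * (V i * (V j)ᴴ))} ∧
    (Φ.Strict →
      (sSup {r : ℝ | ∃ i j : Fin m, i ≠ j ∧
          r = Φ.N l ((V i * (V j)ᴴ)ᴴ * (V i * (V j)ᴴ))} =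
        (d : ℝ) * Φ.eta l / ((m : ℝ) * ((m : ℝ) - 1)) * (1 - (d : ℝ) / ((m : ℝ) * l)) ↔
        ∀ i j : Fin m, i ≠ j → ∃ Q ∈ Matrix.unitaryGroup (Fin l) 𝕜,
          V i * (V j)ᴴ = (cmld m l d : 𝕜) • Q)) := by
  classical
  obtain ⟨hres, hproj⟩ := huwp
  -- basic positivity facts
  have hm2 : (2:ℝ) ≤ (m:ℝ) := by exact_mod_cast hm
  have hm0 : (0:ℝ) < (m:ℝ) := by linarith
  have hm1 : (0:ℝ) < (m:ℝ) - 1 := by linarith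
  have hl0 : (0:ℝ) < (l:ℝ) := by exact_mod_cast hl
  have hd0 : (0:ℝ) < (d:ℝ) := by exact_mod_cast hl.trans hld
  set η : ℝ := Φ.eta l with hηdef
  have hη0 : 0 < η := Φ.eta_pos hl
  have hm1' : ((m:ℝ) - 1) ≠ 0 := by linarith
  have hm0' : ((m:ℝ)) ≠ 0 := by linarith
  have hl0' : ((l:ℝ)) ≠ 0 := hl0.ne'
  set c : ℝ := (d:ℝ) / ((m:ℝ) * (l:ℝ)) with hcdef
  have hc0 : 0 < c := by rw [hcdef]; positivity
  have hc1 : c < 1 := by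
    rw [hcdef, div_lt_one (by positivity)]
    calc (d:ℝ) < ((m*l : ℕ) : ℝ) := by exact_mod_cast hdm
      _ = (m:ℝ) * (l:ℝ) := by push_cast; ring
  set B' : ℝ := c * (1 - c) * (l:ℝ) / ((m:ℝ) - 1) with hB'def
  have hB'0 : 0 < B' := by rw [hB'def]; have : 0 < 1 - c := by linarith
                           positivity
  have hBeq : (d : ℝ) * Φ.eta l / ((m : ℝ) * ((m : ℝ) - 1)) * (1 - (d : ℝ) / ((m : ℝ) * l))
      = B' * η := by
    rw [hB'def, hηdef, hcdef]
    field_simp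
  rw [hBeq]
  -- cast of c
  have hcK : ((d : 𝕜) / ((m:𝕜) * (l:𝕜))) = ((c : ℝ) : 𝕜) := by
    rw [hcdef]; push_cast; ring
  -- the set S
  set S : Set ℝ := {r : ℝ | ∃ i j : Fin m, i ≠ j ∧
      r = Φ.N l ((V i * (V j)ᴴ)ᴴ * (V i * (V j)ᴴ))} with hSdef
  have hbdd : BddAbove S := by
    apply Set.Finite.bddAbove
    apply Set.Finite.subset (Set.finite_range
      (fun p : Fin m × Fin m => Φ.N l ((V p.1 * (V p.2)ᴴ)ᴴ * (V p.1 * (V p.2)ᴴ))))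
    rintro r ⟨i, j, -, rfl⟩
    exact ⟨(i, j), rfl⟩
  -- two distinct indices
  have hi0 : (0:ℕ) < m := by omega
  have hi1 : (1:ℕ) < m := by omega
  set i1 : Fin m := ⟨1, hi1⟩
  set j0 : Fin m := ⟨0, hi0⟩
  have hne10 : i1 ≠ j0 := by simp [i1, j0, Fin.ext_iff]
  -- the sum identity for each j
  have hAsum : ∀ j : Fin m, ∑ i ∈ Finset.univ.erase j,
      ((V i * (V j)ᴴ)ᴴ * (V i * (V j)ᴴ)) =
      ((c * (1 - c) : ℝ) : 𝕜) • (1 : Matrix (Fin l) (Fin l) 𝕜) := by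
    intro j
    have h1 : ∀ i : Fin m, (V i * (V j)ᴴ)ᴴ * (V i * (V j)ᴴ)
        = V j * ((V i)ᴴ * V i) * (V j)ᴴ := by
      intro i
      simp only [Matrix.conjTranspose_mul, Matrix.conjTranspose_conjTranspose, Matrix.mul_assoc]
    have h2 : ∑ i : Fin m, (V i * (V j)ᴴ)ᴴ * (V i * (V j)ᴴ) = ((c : ℝ) : 𝕜) • 1 := by
      calc ∑ i : Fin m, (V i * (V j)ᴴ)ᴴ * (V i * (V j)ᴴ)
          = V j * (∑ i : Fin m, (V i)ᴴ * V i) * (V j)ᴴ := by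
            simp only [Matrix.mul_sum, Matrix.sum_mul]
            exact Finset.sum_congr rfl fun i _ => h1 i
        _ = ((c : ℝ) : 𝕜) • 1 := by rw [hres, Matrix.mul_one, hproj j, hcK]
    have h3 : (V j * (V j)ᴴ)ᴴ * (V j * (V j)ᴴ) = ((c * c : ℝ) : 𝕜) • 1 := by
      rw [hproj j, hcK, Matrix.conjTranspose_smul, Matrix.conjTranspose_one,
        Matrix.smul_mul, Matrix.mul_smul, smul_smul, one_mul]
      congr 1
      rw [RCLike.star_def, RCLike.conj_ofReal, ← RCLike.ofReal_mul]
    rw [Finset.sum_erase_eq_sub (Finset.mem_univ j), h2, h3, ← sub_smul]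
    congr 1
    rw [← RCLike.ofReal_sub]
    congr 1
    ring
  -- traces
  have htsum : ∀ j : Fin m, ∑ i ∈ Finset.univ.erase j,
      RCLike.re ((V i * (V j)ᴴ)ᴴ * (V i * (V j)ᴴ)).trace = c * (1 - c) * (l:ℝ) := by
    intro j
    have h := congrArg (fun M : Matrix (Fin l) (Fin l) 𝕜 => RCLike.re M.trace) (hAsum j)
    simp only [Matrix.trace_sum, map_sum] at h
    rw [h, Matrix.trace_smul, Matrix.trace_one, smul_eq_mul]
    rw [← RCLike.ofReal_natCast, ← RCLike.ofReal_mul, RCLike.ofReal_re]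
    simp
  -- lower bound for each norm by trace
  have hlow : ∀ i j : Fin m,
      RCLike.re ((V i * (V j)ᴴ)ᴴ * (V i * (V j)ᴴ)).trace * η
        ≤ Φ.N l ((V i * (V j)ᴴ)ᴴ * (V i * (V j)ᴴ)) := fun i j =>
    Φ.re_trace_mul_eta_le hl _ (Matrix.posSemidef_conjTranspose_mul_self _)
  -- cardinality facts
  have hcard : ∀ j : Fin m, (Finset.univ.erase j).card = m - 1 := by
    intro j
    rw [Finset.card_erase_of_mem (Finset.mem_univ _), Finset.card_univ, Fintype.card_fin]
  have hcastm1 : ((m - 1 : ℕ) : ℝ) = (m:ℝ) - 1 := by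
    rw [Nat.cast_sub (by omega), Nat.cast_one]
  have hconstsum : ∀ j : Fin m, ∑ _i ∈ Finset.univ.erase j, B' = c * (1 - c) * (l:ℝ) := by
    intro j
    rw [Finset.sum_const, hcard j, nsmul_eq_mul, hcastm1, hB'def]
    field_simp
  have hne' : ∀ j : Fin m, (Finset.univ.erase j).Nonempty := by
    intro j
    rw [← Finset.card_pos, hcard j]
    omega
  -- PART 1: the lower bound
  have hpart1 : B' * η ≤ sSup S := by
    obtain ⟨i, hi, hile⟩ := Finset.exists_le_of_sum_le (hne' j0)
      (by rw [hconstsum j0, htsum j0] :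
        ∑ i ∈ Finset.univ.erase j0, B'
          ≤ ∑ i ∈ Finset.univ.erase j0, RCLike.re ((V i * (V j0)ᴴ)ᴴ * (V i * (V j0)ᴴ)).trace)
    have h1 : B' * η ≤ Φ.N l ((V i * (V j0)ᴴ)ᴴ * (V i * (V j0)ᴴ)) :=
      le_trans (mul_le_mul_of_nonneg_right hile hη0.le) (hlow i j0)
    exact le_trans h1 (le_csSup hbdd ⟨i, j0, Finset.ne_of_mem_erase hi, rfl⟩)
  refine ⟨hpart1, fun hstrict => ?_⟩
  -- value of cmld
  have hcm2 : (cmld m l d) ^ 2 = c * (1 - c) / ((m:ℝ) - 1) := by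
    rw [cmld, Real.sq_sqrt]
    · rw [hcdef]
      field_simp
    · have h1c : 0 ≤ 1 - c := by linarith
      rw [hcdef] at h1c
      exact mul_nonneg (by positivity) h1c
  have hcm0 : 0 < cmld m l d := by
    rw [cmld, Real.sqrt_pos]
    have h1c : 0 < 1 - c := by linarith
    rw [hcdef] at h1c
    exact mul_pos (by positivity) h1c
  have hB'cm : B' = (cmld m l d) ^ 2 * (l:ℝ) := by
    rw [hcm2, hB'def]; ring
  constructor
  · -- equality implies unitary structure
    intro hsup i j hij
    have hupper : ∀ i' j' : Fin m, i' ≠ j' →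
        Φ.N l ((V i' * (V j')ᴴ)ᴴ * (V i' * (V j')ᴴ)) ≤ B' * η := by
      intro i' j' h
      rw [← hsup]
      exact le_csSup hbdd ⟨i', j', h, rfl⟩
    have htle : ∀ i' j' : Fin m, i' ≠ j' →
        RCLike.re ((V i' * (V j')ᴴ)ᴴ * (V i' * (V j')ᴴ)).trace ≤ B' := by
      intro i' j' h
      have := (hlow i' j').trans (hupper i' j' h)
      exact le_of_mul_le_mul_right this hη0
    -- for our j : trace equality termwise
    have hteq : ∀ i' ∈ Finset.univ.erase j,
        RCLike.re ((V i' * (V j)ᴴ)ᴴ * (V i' * (V j)ᴴ)).trace = B' := by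
      have hsums : ∑ i' ∈ Finset.univ.erase j,
          RCLike.re ((V i' * (V j)ᴴ)ᴴ * (V i' * (V j)ᴴ)).trace
          = ∑ _i' ∈ Finset.univ.erase j, B' := by rw [htsum j, hconstsum j]
      exact (Finset.sum_eq_sum_iff_of_le fun i' hi' =>
        htle i' j (Finset.ne_of_mem_erase hi')).mp hsums
    have htij : RCLike.re ((V i * (V j)ᴴ)ᴴ * (V i * (V j)ᴴ)).trace = B' :=
      hteq i (Finset.mem_erase.mpr ⟨hij, Finset.mem_univ i⟩)
    -- squeeze: the norm equals trace * eta
    have hNeq : Φ.N l ((V i * (V j)ᴴ)ᴴ * (V i * (V j)ᴴ))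
        = RCLike.re ((V i * (V j)ᴴ)ᴴ * (V i * (V j)ᴴ)).trace * Φ.eta l := by
      have h1 := hlow i j
      have h2 := hupper i j hij
      rw [htij] at h1 ⊢
      rw [← hηdef]
      exact le_antisymm h2 h1
    have hpsd := Matrix.posSemidef_conjTranspose_mul_self (V i * (V j)ᴴ)
    have hAeq := hstrict l _ hpsd hNeq
    -- the trace is real
    have htr_real : ((V i * (V j)ᴴ)ᴴ * (V i * (V j)ᴴ)).trace = ((B' : ℝ) : 𝕜) := by
      have hherm := hpsd.1
      have hstar : star (((V i * (V j)ᴴ)ᴴ * (V i * (V j)ᴴ)).trace)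
          = ((V i * (V j)ᴴ)ᴴ * (V i * (V j)ᴴ)).trace := by
        rw [← Matrix.trace_conjTranspose, hherm.eq]
      rw [RCLike.star_def, RCLike.conj_eq_iff_re] at hstar
      rw [← hstar, htij]
    rw [htr_real] at hAeq
    -- identify the matrix
    have hA2 : (V i * (V j)ᴴ)ᴴ * (V i * (V j)ᴴ)
        = (((cmld m l d) ^ 2 : ℝ) : 𝕜) • 1 := by
      rw [hAeq]
      congr 1
      rw [hB'cm]
      push_cast
      field_simp
    -- build the unitary
    refine ⟨(((cmld m l d)⁻¹ : ℝ) : 𝕜) • (V i * (V j)ᴴ), ?_, ?_⟩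
    · rw [Matrix.mem_unitaryGroup_iff']
      rw [star_smul, Matrix.star_eq_conjTranspose, Matrix.smul_mul, Matrix.mul_smul,
        smul_smul, hA2, smul_smul]
      rw [RCLike.star_def, RCLike.conj_ofReal, ← RCLike.ofReal_mul, ← RCLike.ofReal_mul]
      rw [show (cmld m l d)⁻¹ * (cmld m l d)⁻¹ * (cmld m l d) ^ 2 = 1 by
        rw [sq]; field_simp]
      simp
    · rw [smul_smul, ← RCLike.ofReal_mul, mul_inv_cancel₀ hcm0.ne']
      simp
  · -- unitary structure implies equality
    intro hQ
    have helem : ∀ i j : Fin m, i ≠ j →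
        Φ.N l ((V i * (V j)ᴴ)ᴴ * (V i * (V j)ᴴ)) = B' * η := by
      intro i j hij
      obtain ⟨Q, hQmem, hXQ⟩ := hQ i j hij
      have hQ1 : Qᴴ * Q = 1 := by
        rw [← Matrix.star_eq_conjTranspose]
        exact Matrix.mem_unitaryGroup_iff'.mp hQmem
      have hA2 : (V i * (V j)ᴴ)ᴴ * (V i * (V j)ᴴ)
          = (((cmld m l d) ^ 2 : ℝ) : 𝕜) • (1 : Matrix (Fin l) (Fin l) 𝕜) := by
        rw [hXQ, Matrix.conjTranspose_smul, Matrix.smul_mul, Matrix.mul_smul, smul_smul,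
          hQ1, RCLike.star_def, RCLike.conj_ofReal, ← RCLike.ofReal_mul]
        rw [sq]
      rw [hA2, Φ.N_real_smul l (by positivity) 1]
      have hN1 : Φ.N l 1 = (l:ℝ) * η := by
        rw [hηdef, CUIN.eta]
        field_simp
      rw [hN1, hB'cm]
      ring
    have hSe : Φ.N l ((V i1 * (V j0)ᴴ)ᴴ * (V i1 * (V j0)ᴴ)) ∈ S := ⟨i1, j0, hne10, rfl⟩
    apply le_antisymm
    · apply csSup_le ⟨_, hSe⟩
      rintro r ⟨i, j, hij, rfl⟩
      exact (helem i j hij).le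
    · rw [← helem i1 j0 hne10]
      exact le_csSup hbdd hSe
end
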